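/- arXiv:1704.01983 — 3 statements merged into one kernel-verified Lean document; each statement's English description precedes it below -/
import Mathlib

section
/- Let F be an optimal Steiner forest of a two-player network design game with P_1∩P_2 a nonempty common subpath, let ξ be a pushed-to-the-left optimal solution of LP(F) in which some edge of F is not completely paid, and let e be the first edge of F (with respect to the ordering of the edges of F) that is not completely paid. Then e does not lie in the left part of F, i.e. ord(e) > ℓ_1+ℓ_2. -/
namespace NDG

variable {V : Type*} [DecidableEq V]

/-- Total cost of a finite set of edges. -/
def cost (c : Sym2 V → ℝ) (F : Finset (Sym2 V)) : ℝ := ∑ e ∈ F, c e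

/-- A Steiner forest: an acyclic set of edges of `G` connecting both
terminal pairs. -/
def IsSteinerForest (G : SimpleGraph V) (s₁ t₁ s₂ t₂ : V) (F : Finset (Sym2 V)) : Prop :=
  (↑F ⊆ G.edgeSet) ∧
  (SimpleGraph.fromEdgeSet (↑F : Set (Sym2 V))).IsAcyclic ∧
  (∃ p : G.Walk s₁ t₁, p.IsPath ∧ ∀ e ∈ p.edges, e ∈ F) ∧
  (∃ p : G.Walk s₂ t₂, p.IsPath ∧ ∀ e ∈ p.edges, e ∈ F)

/-- An optimal Steiner forest: one of minimum total cost. -/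
def IsOptimalSteinerForest (G : SimpleGraph V) (s₁ t₁ s₂ t₂ : V) (c : Sym2 V → ℝ)
    (F : Finset (Sym2 V)) : Prop :=
  IsSteinerForest G s₁ t₁ s₂ t₂ F ∧
  ∀ F', IsSteinerForest G s₁ t₁ s₂ t₂ F' → cost c F ≤ cost c F'

/-- A strategy of a player: a simple path between her terminals. -/
abbrev Strat (G : SimpleGraph V) (s t : V) := {p : G.Walk s t // p.IsPath}

/-- A cost sharing protocol: cost shares for both players on every edge,
depending on the chosen strategy profile. -/
abbrev Protocol (G : SimpleGraph V) (s₁ t₁ s₂ t₂ : V) :=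
  Strat G s₁ t₁ → Strat G s₂ t₂ → Fin 2 → Sym2 V → ℝ

/-- The set of players using edge `e` in the profile `(P₁, P₂)`. -/
def usedBy {G : SimpleGraph V} {s₁ t₁ s₂ t₂ : V}
    (P₁ : Strat G s₁ t₁) (P₂ : Strat G s₂ t₂) (e : Sym2 V) : Finset (Fin 2) :=
  (if e ∈ P₁.1.edges then {0} else ∅) ∪ (if e ∈ P₂.1.edges then {1} else ∅)

/-- The total cost player 1 pays. -/
def cost₁ {G : SimpleGraph V} {s₁ t₁ s₂ t₂ : V} (Ξ : Protocol G s₁ t₁ s₂ t₂)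
    (P₁ : Strat G s₁ t₁) (P₂ : Strat G s₂ t₂) : ℝ :=
  ∑ e ∈ P₁.1.edges.toFinset, Ξ P₁ P₂ 0 e

/-- The total cost player 2 pays. -/
def cost₂ {G : SimpleGraph V} {s₁ t₁ s₂ t₂ : V} (Ξ : Protocol G s₁ t₁ s₂ t₂)
    (P₁ : Strat G s₁ t₁) (P₂ : Strat G s₂ t₂) : ℝ :=
  ∑ e ∈ P₂.1.edges.toFinset, Ξ P₁ P₂ 1 e

/-- Pure Nash equilibrium of the two-player game induced by the protocol `Ξ`. -/
def IsPNE {G : SimpleGraph V} {s₁ t₁ s₂ t₂ : V} (Ξ : Protocol G s₁ t₁ s₂ t₂)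
    (P₁ : Strat G s₁ t₁) (P₂ : Strat G s₂ t₂) : Prop :=
  (∀ Q₁, cost₁ Ξ P₁ P₂ ≤ cost₁ Ξ Q₁ P₂) ∧ (∀ Q₂, cost₂ Ξ P₁ P₂ ≤ cost₂ Ξ P₁ Q₂)

/-- A separable cost sharing protocol: nonnegative, budget-balanced, stable and
separable (cost shares on an edge depend only on the set of players using it). -/
structure IsSeparable {G : SimpleGraph V} {s₁ t₁ s₂ t₂ : V} (c : Sym2 V → ℝ)
    (Ξ : Protocol G s₁ t₁ s₂ t₂) : Prop where
  nonneg : ∀ P₁ P₂ i e, 0 ≤ Ξ P₁ P₂ i e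
  budget : ∀ P₁ P₂ e, (usedBy P₁ P₂ e).Nonempty →
    ∑ i ∈ usedBy P₁ P₂ e, Ξ P₁ P₂ i e = c e
  stable : ∃ P₁ P₂, IsPNE Ξ P₁ P₂
  separable : ∀ P₁ P₂ Q₁ Q₂ e, usedBy P₁ P₂ e = usedBy Q₁ Q₂ e →
    ∀ i, Ξ P₁ P₂ i e = Ξ Q₁ Q₂ i e

/-- A Steiner forest `F` is enforceable if the profile of the unique paths of
the two players inside `F` is a pure Nash equilibrium of the game induced by
some separable cost sharing protocol. -/
def Enforceable (G : SimpleGraph V) (s₁ t₁ s₂ t₂ : V) (c : Sym2 V → ℝ)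
    (F : Finset (Sym2 V)) : Prop :=
  ∃ (P₁ : Strat G s₁ t₁) (P₂ : Strat G s₂ t₂),
    (∀ e ∈ P₁.1.edges, e ∈ F) ∧ (∀ e ∈ P₂.1.edges, e ∈ F) ∧
    (∀ Q₁ : Strat G s₁ t₁, (∀ e ∈ Q₁.1.edges, e ∈ F) → Q₁ = P₁) ∧
    (∀ Q₂ : Strat G s₂ t₂, (∀ e ∈ Q₂.1.edges, e ∈ F) → Q₂ = P₂) ∧
    ∃ Ξ : Protocol G s₁ t₁ s₂ t₂, IsSeparable c Ξ ∧ IsPNE Ξ P₁ P₂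

/-- `(G,(s₁,t₁),(s₂,t₂))` is efficient: for every nonnegative cost function
some optimal Steiner forest is enforceable (the PoS is 1). -/
def Efficient (G : SimpleGraph V) (s₁ t₁ s₂ t₂ : V) : Prop :=
  ∀ c : Sym2 V → ℝ, (∀ e, 0 ≤ c e) →
    ∃ F, IsOptimalSteinerForest G s₁ t₁ s₂ t₂ c F ∧ Enforceable G s₁ t₁ s₂ t₂ c F

/-- `(G,(s₁,t₁),(s₂,t₂))` is strongly efficient: for every nonnegative cost
function every optimal Steiner forest is enforceable. -/
def StronglyEfficient (G : SimpleGraph V) (s₁ t₁ s₂ t₂ : V) : Prop :=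
  ∀ c : Sym2 V → ℝ, (∀ e, 0 ≤ c e) →
    ∀ F, IsOptimalSteinerForest G s₁ t₁ s₂ t₂ c F → Enforceable G s₁ t₁ s₂ t₂ c F

/-- Total cost of (the edges of) a walk. -/
def walkCost {G : SimpleGraph V} (c : Sym2 V → ℝ) {y z : V} (q : G.Walk y z) : ℝ :=
  ∑ e ∈ q.edges.toFinset, c e

section LP

variable (G : SimpleGraph V) {s₁ t₁ s₂ t₂ : V} (c : Sym2 V → ℝ)

/-- Feasibility for LP(F), where `F` consists of the edges of `P₁` and `P₂`:
nonnegative cost shares, supported on the respective path, capacity constraints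
on every edge of `F`, and the Nash constraints for all alternative paths. -/
def Feasible2 (P₁ : G.Walk s₁ t₁) (P₂ : G.Walk s₂ t₂) (ξ₁ ξ₂ : Sym2 V → ℝ) : Prop :=
  (∀ e, 0 ≤ ξ₁ e) ∧ (∀ e, 0 ≤ ξ₂ e) ∧
  (∀ e, e ∉ P₁.edges → ξ₁ e = 0) ∧ (∀ e, e ∉ P₂.edges → ξ₂ e = 0) ∧
  (∀ e ∈ P₁.edges.toFinset ∪ P₂.edges.toFinset, ξ₁ e + ξ₂ e ≤ c e) ∧
  (∀ q : G.Walk s₁ t₁, q.IsPath →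
    ∑ e ∈ P₁.edges.toFinset \ q.edges.toFinset, ξ₁ e ≤
      ∑ e ∈ q.edges.toFinset \ P₁.edges.toFinset, c e) ∧
  (∀ q : G.Walk s₂ t₂, q.IsPath →
    ∑ e ∈ P₂.edges.toFinset \ q.edges.toFinset, ξ₂ e ≤
      ∑ e ∈ q.edges.toFinset \ P₂.edges.toFinset, c e)

/-- Objective function of LP(F). -/
def Obj2 (P₁ : G.Walk s₁ t₁) (P₂ : G.Walk s₂ t₂) (ξ₁ ξ₂ : Sym2 V → ℝ) : ℝ :=
  ∑ e ∈ P₁.edges.toFinset, ξ₁ e + ∑ e ∈ P₂.edges.toFinset, ξ₂ e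

/-- Optimal solutions of LP(F). -/
def Optimal2 (P₁ : G.Walk s₁ t₁) (P₂ : G.Walk s₂ t₂) (ξ₁ ξ₂ : Sym2 V → ℝ) : Prop :=
  Feasible2 G c P₁ P₂ ξ₁ ξ₂ ∧
  ∀ η₁ η₂, Feasible2 G c P₁ P₂ η₁ η₂ → Obj2 G P₁ P₂ η₁ η₂ ≤ Obj2 G P₁ P₂ ξ₁ ξ₂

/-- Edge `e` is completely paid. -/
def Paid (ξ₁ ξ₂ : Sym2 V → ℝ) (e : Sym2 V) : Prop := ξ₁ e + ξ₂ e = c e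

/-- Increase the cost share on `e` by `ε` and decrease it on `f` by `ε`. -/
def pushFun (ξ : Sym2 V → ℝ) (e f : Sym2 V) (ε : ℝ) : Sym2 V → ℝ :=
  fun g => if g = e then ξ g + ε else if g = f then ξ g - ε else ξ g

/-- The ordering of the edges of `F`: first the `ℓ₁` edges of `P₁` from `s₁` to
the middle part, then the `ℓ₂` edges of `P₂` from `s₂` to the middle part, then
the `m` middle edges from left to right, then the `r₁` edges towards `t₁`, then
the `r₂` edges towards `t₂`. -/
def ordList {a b : V} (L₁ : G.Walk s₁ a) (M : G.Walk a b) (R₁ : G.Walk b t₁)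
    (L₂ : G.Walk s₂ a) (R₂ : G.Walk b t₂) : List (Sym2 V) :=
  L₁.edges ++ L₂.edges ++ M.edges ++ R₁.edges ++ R₂.edges

/-- `k` is the (0-based) position of the first edge of `F` (w.r.t. the
ordering `ord`) which is not completely paid. -/
def FirstUnpaid (ord : List (Sym2 V)) (ξ₁ ξ₂ : Sym2 V → ℝ) (k : ℕ) : Prop :=
  k < ord.length ∧ (∀ e, ord[k]? = some e → ¬ Paid c ξ₁ ξ₂ e) ∧
  ∀ j, j < k → ∀ e, ord[j]? = some e → Paid c ξ₁ ξ₂ e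

/-- The solution `(ξ₁, ξ₂)` is pushed to the left: no push operation (moving
an `ε > 0` of a player's cost share from an edge of higher order to an edge of
lower order) yields a feasible solution of LP(F). -/
def PushedLeft (P₁ : G.Walk s₁ t₁) (P₂ : G.Walk s₂ t₂) (ord : List (Sym2 V))
    (ξ₁ ξ₂ : Sym2 V → ℝ) : Prop :=
  (∀ e ∈ P₁.edges, ∀ f ∈ P₁.edges, ord.idxOf e < ord.idxOf f →
    ∀ ε : ℝ, 0 < ε → ¬ Feasible2 G c P₁ P₂ (pushFun ξ₁ e f ε) ξ₂) ∧
  (∀ e ∈ P₂.edges, ∀ f ∈ P₂.edges, ord.idxOf e < ord.idxOf f →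
    ∀ ε : ℝ, 0 < ε → ¬ Feasible2 G c P₁ P₂ ξ₁ (pushFun ξ₂ e f ε))

/-- Feasibility of the operation CHANGE(j,i) for the middle edges `ej`, `ei`:
increasing `ξ₂` on `ei` and `ξ₁` on `ej` while simultaneously decreasing `ξ₂`
on `ej` and `ξ₁` on `ei` by some common positive amount stays feasible. -/
def ChangeFeasible (P₁ : G.Walk s₁ t₁) (P₂ : G.Walk s₂ t₂) (ξ₁ ξ₂ : Sym2 V → ℝ)
    (ej ei : Sym2 V) : Prop :=
  ∃ ε : ℝ, 0 < ε ∧ Feasible2 G c P₁ P₂ (pushFun ξ₁ ej ei ε) (pushFun ξ₂ ei ej ε)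

/-- Property (2M): the sum of cost shares of Player 2 is maximal among all
optimal solutions of LP(F) whose first not-completely-paid edge is the edge of
order `k`. -/
def Max2 (P₁ : G.Walk s₁ t₁) (P₂ : G.Walk s₂ t₂) (ord : List (Sym2 V))
    (ξ₂ : Sym2 V → ℝ) (k : ℕ) : Prop :=
  ∀ η₁ η₂, Optimal2 G c P₁ P₂ η₁ η₂ → FirstUnpaid c ord η₁ η₂ k →
    ∑ e ∈ P₂.edges.toFinset, η₂ e ≤ ∑ e ∈ P₂.edges.toFinset, ξ₂ e

/-- Property (NC): CHANGE(j,i) is not feasible for any pair `j < i` of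
middle-part positions (the middle part occupies positions `ℓ, …, ℓ+m-1`). -/
def NoChange (P₁ : G.Walk s₁ t₁) (P₂ : G.Walk s₂ t₂) (ord : List (Sym2 V))
    (ξ₁ ξ₂ : Sym2 V → ℝ) (ℓ m : ℕ) : Prop :=
  ∀ j i : ℕ, ℓ ≤ j → j < i → i < ℓ + m →
    ∀ ej ei : Sym2 V, ord[j]? = some ej → ord[i]? = some ei →
      ¬ ChangeFeasible G c P₁ P₂ ξ₁ ξ₂ ej ei

/-- The solution is maximized for Player 2: properties (2M) and (NC). -/
def Maximized2 (P₁ : G.Walk s₁ t₁) (P₂ : G.Walk s₂ t₂) (ord : List (Sym2 V))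
    (ξ₁ ξ₂ : Sym2 V → ℝ) (k ℓ m : ℕ) : Prop :=
  Max2 G c P₁ P₂ ord ξ₂ k ∧ NoChange G c P₁ P₂ ord ξ₁ ξ₂ ℓ m

end LP

section Statement4Aux

open SimpleGraph

lemma sum_toFinset_le_map_sum (w : Sym2 V → ℝ) (hw : ∀ g, 0 ≤ w g) :
    ∀ l : List (Sym2 V), ∑ g ∈ l.toFinset, w g ≤ (l.map w).sum := by
  intro l
  induction l with
  | nil => simp
  | cons x l ih =>
    rw [List.toFinset_cons, List.map_cons, List.sum_cons]
    by_cases hx : x ∈ l.toFinset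
    · rw [Finset.insert_eq_self.mpr hx]
      have := hw x; linarith
    · rw [Finset.sum_insert hx]; linarith

/-- Weight of a walk: sum of edge weights along the edge list. -/
def wsum {G : SimpleGraph V} (w : Sym2 V → ℝ) {u v : V} (p : G.Walk u v) : ℝ :=
  (p.edges.map w).sum

lemma wsum_append {G : SimpleGraph V} (w : Sym2 V → ℝ) {u v x : V}
    (p : G.Walk u v) (q : G.Walk v x) :
    wsum w (p.append q) = wsum w p + wsum w q := by
  simp [wsum, Walk.edges_append]

lemma wsum_eq_sum {G : SimpleGraph V} (w : Sym2 V → ℝ) {u v : V} {p : G.Walk u v}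
    (hp : p.edges.Nodup) : wsum w p = ∑ g ∈ p.edges.toFinset, w g :=
  (List.sum_toFinset w hp).symm

lemma sum_le_wsum {G : SimpleGraph V} {w : Sym2 V → ℝ} (hw : ∀ g, 0 ≤ w g) {u v : V}
    (p : G.Walk u v) : ∑ g ∈ p.edges.toFinset, w g ≤ wsum w p :=
  sum_toFinset_le_map_sum w hw _

lemma exists_first_pred_edge {G : SimpleGraph V} (pred : Sym2 V → Prop) [DecidablePred pred] :
    ∀ {x y : V} (m : G.Walk x y), (∃ g ∈ m.edges, pred g) →
    ∃ (u u' : V) (hadj : G.Adj u u') (m₁ : G.Walk x u) (m₂ : G.Walk u' y),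
      m = m₁.append (SimpleGraph.Walk.cons hadj m₂) ∧ pred s(u, u') ∧
        ∀ g ∈ m₁.edges, ¬ pred g := by
  intro x y m
  induction m with
  | nil => rintro ⟨g, hg, -⟩; simp [Walk.edges_nil] at hg
  | @cons x v y hadj p ih =>
    intro hex
    by_cases hp : pred s(x, v)
    · exact ⟨x, v, hadj, SimpleGraph.Walk.nil, p, by simp, hp, by simp⟩
    · obtain ⟨g, hg, hpg⟩ := hex
      rw [SimpleGraph.Walk.edges_cons] at hg
      rcases List.mem_cons.1 hg with h | h
      · exact absurd (h ▸ hpg) hp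
      · obtain ⟨u, u', ha, m₁, m₂, heq, hpu, hm₁⟩ := ih ⟨g, h, hpg⟩
        refine ⟨u, u', ha, SimpleGraph.Walk.cons hadj m₁, m₂, ?_, hpu, ?_⟩
        · rw [SimpleGraph.Walk.cons_append, heq]
        · intro g hgm
          rw [SimpleGraph.Walk.edges_cons] at hgm
          rcases List.mem_cons.1 hgm with h' | h'
          · exact h' ▸ hp
          · exact hm₁ g h'

lemma reachable_delete {H : SimpleGraph V} {g : Sym2 V} {x y : V}
    (hg : g = s(x, y)) (hr : (H \ SimpleGraph.fromEdgeSet {g}).Reachable x y) :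
    ∀ {u v : V}, H.Walk u v → (H \ SimpleGraph.fromEdgeSet {g}).Reachable u v := by
  intro u v p
  induction p with
  | nil => exact SimpleGraph.Reachable.refl _
  | @cons u w v hadj p ih =>
    refine SimpleGraph.Reachable.trans ?_ ih
    by_cases he : s(u, w) = g
    · rw [hg] at he
      rcases Sym2.eq_iff.1 he with ⟨h1, h2⟩ | ⟨h1, h2⟩
      · subst h1; subst h2; exact hr
      · subst h1; subst h2; exact hr.symm
    · refine SimpleGraph.Adj.reachable ?_
      rw [SimpleGraph.sdiff_adj]
      refine ⟨hadj, fun hb => he ?_⟩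
      rw [SimpleGraph.fromEdgeSet_adj] at hb
      simpa using hb.1

lemma cost_mono {c : Sym2 V → ℝ} (hc : ∀ g, 0 ≤ c g) {S T : Finset (Sym2 V)} (h : S ⊆ T) :
    cost c S ≤ cost c T :=
  Finset.sum_le_sum_of_subset_of_nonneg h (fun g _ _ => hc g)

lemma exists_steiner_subset (G : SimpleGraph V) (s₁ t₁ s₂ t₂ : V) :
    ∀ S : Finset (Sym2 V), ↑S ⊆ G.edgeSet →
    (∃ p : G.Walk s₁ t₁, ∀ g ∈ p.edges, g ∈ S) →
    (∃ p : G.Walk s₂ t₂, ∀ g ∈ p.edges, g ∈ S) →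
    ∃ F', F' ⊆ S ∧ IsSteinerForest G s₁ t₁ s₂ t₂ F' := by
  intro S
  induction S using Finset.strongInduction with
  | _ S ih =>
    intro hS h1 h2
    by_cases hac : (SimpleGraph.fromEdgeSet (↑S : Set (Sym2 V))).IsAcyclic
    · obtain ⟨p₁, hp₁⟩ := h1
      obtain ⟨p₂, hp₂⟩ := h2
      refine ⟨S, subset_rfl, hS, hac,
        ⟨(p₁.toPath : G.Walk s₁ t₁), p₁.toPath.2,
          fun g hg => hp₁ g (SimpleGraph.Walk.edges_toPath_subset p₁ hg)⟩,
        ⟨(p₂.toPath : G.Walk s₂ t₂), p₂.toPath.2,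
          fun g hg => hp₂ g (SimpleGraph.Walk.edges_toPath_subset p₂ hg)⟩⟩
    · simp only [SimpleGraph.IsAcyclic] at hac
      push_neg at hac
      obtain ⟨v, cyc, hcyc⟩ := hac
      have hlen : 0 < cyc.edges.length := by
        rw [SimpleGraph.Walk.length_edges]
        have := hcyc.three_le_length; omega
      obtain ⟨g, hgmem⟩ := List.exists_mem_of_length_pos hlen
      obtain ⟨x, y, rfl⟩ : ∃ x y, g = s(x, y) := by
        obtain ⟨⟨x, y⟩, h⟩ := Quot.exists_rep g
        exact ⟨x, y, h.symm⟩
      have key := (SimpleGraph.adj_and_reachable_delete_edges_iff_exists_cycle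
        (G := SimpleGraph.fromEdgeSet (↑S : Set (Sym2 V))) (v := x) (w := y)).2
        ⟨v, cyc, hcyc, hgmem⟩
      obtain ⟨hadj, hreach⟩ := key
      have hgS : s(x, y) ∈ S := by
        rw [SimpleGraph.fromEdgeSet_adj] at hadj
        exact_mod_cast hadj.1
      have hHeq : (SimpleGraph.fromEdgeSet (↑S : Set (Sym2 V)) \
          SimpleGraph.fromEdgeSet {s(x, y)}) =
          SimpleGraph.fromEdgeSet (↑(S.erase s(x, y)) : Set (Sym2 V)) := by
        rw [Finset.coe_erase, SimpleGraph.fromEdgeSet_sdiff]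
      have hwalkS : ∀ {u' v' : V} (p : G.Walk u' v'), (∀ g ∈ p.edges, g ∈ S) →
          ∃ p' : G.Walk u' v', ∀ g ∈ p'.edges, g ∈ S.erase s(x, y) := by
        intro u' v' p hp
        have hpe : ∀ g ∈ p.edges, g ∈ (SimpleGraph.fromEdgeSet (↑S : Set (Sym2 V))).edgeSet := by
          intro g hg
          rw [SimpleGraph.edgeSet_fromEdgeSet]
          exact ⟨by exact_mod_cast hp g hg,
            SimpleGraph.not_isDiag_of_mem_edgeSet G (hS (by exact_mod_cast hp g hg))⟩
        have hr' := reachable_delete rfl hreach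
          (p.transfer (SimpleGraph.fromEdgeSet (↑S : Set (Sym2 V))) hpe)
        rw [hHeq] at hr'
        obtain ⟨p'⟩ := hr'
        have hp'e : ∀ g ∈ p'.edges, g ∈ S.erase s(x, y) := by
          intro g hg
          have := SimpleGraph.Walk.edges_subset_edgeSet p' hg
          rw [SimpleGraph.edgeSet_fromEdgeSet] at this
          exact_mod_cast this.1
        have hp'G : ∀ g ∈ p'.edges, g ∈ G.edgeSet := fun g hg =>
          hS (by exact_mod_cast Finset.mem_of_mem_erase (hp'e g hg))
        refine ⟨p'.transfer G hp'G, ?_⟩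
        rw [SimpleGraph.Walk.edges_transfer]
        exact hp'e
      obtain ⟨p₁, hp₁⟩ := h1
      obtain ⟨p₂, hp₂⟩ := h2
      obtain ⟨F', hsub, hF'⟩ := ih (S.erase s(x, y)) (Finset.erase_ssubset hgS)
        (fun g hg => hS (by exact_mod_cast Finset.mem_of_mem_erase hg))
        (hwalkS p₁ hp₁) (hwalkS p₂ hp₂)
      exact ⟨F', hsub.trans (Finset.erase_subset _ _), hF'⟩

end Statement4Aux

section Statement4Key

open SimpleGraph List Finset

lemma sum_pushFun_ne {ξ : Sym2 V → ℝ} {e f : Sym2 V} (hef : e ≠ f) (ε : ℝ)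
    (S : Finset (Sym2 V)) :
    ∑ g ∈ S, pushFun ξ e f ε g =
      ∑ g ∈ S, ξ g + (if e ∈ S then ε else 0) - (if f ∈ S then ε else 0) := by
  have hval : ∀ g ∈ S, pushFun ξ e f ε g =
      ξ g + ((if g = e then ε else 0) + (if g = f then -ε else 0)) := by
    intro g _
    by_cases h1 : g = e
    · by_cases h2 : g = f
      · exact absurd (h1.symm.trans h2) hef
      · simp [pushFun, h1, h2, hef]
    · by_cases h2 : g = f
      · simp [pushFun, h1, h2, Ne.symm hef]; ring
      · simp [pushFun, h1, h2]
  rw [Finset.sum_congr rfl hval]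
  rw [Finset.sum_add_distrib, Finset.sum_add_distrib, Finset.sum_ite_eq' S e fun _ => ε,
    Finset.sum_ite_eq' S f fun _ => -ε]
  by_cases he : e ∈ S <;> by_cases hf : f ∈ S <;> simp [he, hf] <;> ring

lemma sum_pushFun_self {ξ : Sym2 V → ℝ} (e : Sym2 V) (ε : ℝ) (S : Finset (Sym2 V)) :
    ∑ g ∈ S, pushFun ξ e e ε g = ∑ g ∈ S, ξ g + (if e ∈ S then ε else 0) := by
  have hval : ∀ g ∈ S, pushFun ξ e e ε g = ξ g + (if g = e then ε else 0) := by
    intro g _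
    by_cases h1 : g = e <;> simp [pushFun, h1]
  rw [Finset.sum_congr rfl hval, Finset.sum_add_distrib, Finset.sum_ite_eq' S e fun _ => ε]

lemma Feasible2_swap {G : SimpleGraph V} {s₁ t₁ s₂ t₂ : V} {c : Sym2 V → ℝ}
    {P₁ : G.Walk s₁ t₁} {P₂ : G.Walk s₂ t₂} {ξ₁ ξ₂ : Sym2 V → ℝ}
    (h : Feasible2 G c P₁ P₂ ξ₁ ξ₂) : Feasible2 G c P₂ P₁ ξ₂ ξ₁ := by
  obtain ⟨h1, h2, h3, h4, h5, h6, h7⟩ := h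
  refine ⟨h2, h1, h4, h3, ?_, h7, h6⟩
  intro g hg
  rw [Finset.union_comm] at hg
  have := h5 g hg; linarith

lemma Optimal2_swap {G : SimpleGraph V} {s₁ t₁ s₂ t₂ : V} {c : Sym2 V → ℝ}
    {P₁ : G.Walk s₁ t₁} {P₂ : G.Walk s₂ t₂} {ξ₁ ξ₂ : Sym2 V → ℝ}
    (h : Optimal2 G c P₁ P₂ ξ₁ ξ₂) : Optimal2 G c P₂ P₁ ξ₂ ξ₁ := by
  refine ⟨Feasible2_swap h.1, ?_⟩
  intro η₂ η₁ hf
  have := h.2 η₁ η₂ (Feasible2_swap hf)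
  simp only [Obj2] at this ⊢
  linarith

end Statement4Key

section KeyLemma

open SimpleGraph List Finset

set_option maxHeartbeats 2000000 in
/-- Key lemma: the first unpaid edge cannot lie in the private left part of a
player. -/
lemma key_no_unpaid_left [Fintype V]
    {a b s t so tp : V} {G : SimpleGraph V} {c : Sym2 V → ℝ}
    (hc : ∀ g, 0 ≤ c g)
    (L : G.Walk s a) (M : G.Walk a b) (R : G.Walk b t) (Q : G.Walk so tp)
    (hP : ((L.append M).append R).IsPath) (hQ : Q.IsPath)
    (hmeet : ∀ g ∈ ((L.append M).append R).edges, g ∈ Q.edges → g ∈ M.edges)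
    (ξ ξo : Sym2 V → ℝ)
    (hLP : Optimal2 G c ((L.append M).append R) Q ξ ξo)
    (ord : List (Sym2 V))
    (hPL : ∀ e' ∈ ((L.append M).append R).edges, ∀ f' ∈ ((L.append M).append R).edges,
      ord.idxOf e' < ord.idxOf f' → ∀ ε : ℝ, 0 < ε →
      ¬ Feasible2 G c ((L.append M).append R) Q (pushFun ξ e' f' ε) ξo)
    (e : Sym2 V) (he : e ∈ L.edges) (hδ : ξ e + ξo e < c e)
    (hord : ∀ g ∈ M.edges, ord.idxOf e < ord.idxOf g)
    (hmin : ∀ S : Finset (Sym2 V), ↑S ⊆ G.edgeSet →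
      (∃ p : G.Walk s t, ∀ g ∈ p.edges, g ∈ S) →
      (∃ p : G.Walk so tp, ∀ g ∈ p.edges, g ∈ S) →
      cost c (((L.append M).append R).edges.toFinset ∪ Q.edges.toFinset) ≤ cost c S) :
    False := by
  classical
  set P : G.Walk s t := (L.append M).append R with hPdef
  obtain ⟨hfeas, hmax⟩ := hLP
  obtain ⟨hξ0, hξo0, hsupp, hsuppo, hcap, hNash, hNasho⟩ := hfeas
  set Pfs : Finset (Sym2 V) := P.edges.toFinset with hPfs
  set Qfs : Finset (Sym2 V) := Q.edges.toFinset with hQfs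
  set Mfs : Finset (Sym2 V) := M.edges.toFinset with hMfs
  set w : Sym2 V → ℝ := fun g => if g ∈ Pfs then ξ g else c g with hwdef
  set W : ℝ := ∑ g ∈ Pfs, ξ g with hWdef
  have hnodupP : P.edges.Nodup := hP.edges_nodup
  have hPedges : P.edges = (L.edges ++ M.edges) ++ R.edges := by
    rw [hPdef, Walk.edges_append, Walk.edges_append]
  have hnodup2 : ((L.edges ++ M.edges) ++ R.edges).Nodup := by
    rw [← hPedges]; exact hnodupP
  have hLMR := List.nodup_append.1 hnodup2
  have hLMnd := List.nodup_append.1 hLMR.1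
  have hLM : L.edges.Disjoint M.edges := fun g hg hg' => hLMnd.2.2 g hg g hg' rfl
  have hLR : L.edges.Disjoint R.edges := fun g hg hg' =>
    hLMR.2.2 g (List.mem_append_left _ hg) g hg' rfl
  have he' : e ∈ P.edges := by
    rw [hPedges]; exact List.mem_append_left _ (List.mem_append_left _ he)
  have heM : e ∉ M.edges := fun h => hLM he h
  have heR : e ∉ R.edges := fun h => hLR he h
  have hePfs : e ∈ Pfs := by rw [hPfs]; exact List.mem_toFinset.2 he'
  have hw0 : ∀ g, 0 ≤ w g := by
    intro g; rw [hwdef]; dsimp only; split_ifs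
    · exact hξ0 g
    · exact hc g
  have hwP : ∀ g ∈ Pfs, w g = ξ g := by
    intro g hg; rw [hwdef]; dsimp only; rw [if_pos hg]
  have hwNP : ∀ g, g ∉ Pfs → w g = c g := by
    intro g hg; rw [hwdef]; dsimp only; rw [if_neg hg]
  have path_wsum : ∀ q : G.Walk s t, q.IsPath →
      wsum w q = ∑ g ∈ q.edges.toFinset ∩ Pfs, ξ g + ∑ g ∈ q.edges.toFinset \ Pfs, c g := by
    intro q hq
    rw [wsum_eq_sum w hq.edges_nodup,
      ← Finset.sum_inter_add_sum_sdiff q.edges.toFinset Pfs w]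
    congr 1
    · exact Finset.sum_congr rfl fun g hg => hwP g (Finset.mem_inter.1 hg).2
    · exact Finset.sum_congr rfl fun g hg => hwNP g (Finset.mem_sdiff.1 hg).2
  have hWq : ∀ S : Finset (Sym2 V),
      W = ∑ g ∈ Pfs ∩ S, ξ g + ∑ g ∈ Pfs \ S, ξ g := by
    intro S
    rw [hWdef, ← Finset.sum_inter_add_sum_sdiff Pfs S ξ]
  have hge : ∀ ρ : G.Walk s t, W ≤ wsum w ρ := by
    intro ρ
    have hbp := ρ.bypass_isPath
    have h1 : W ≤ wsum w ρ.bypass := by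
      rw [path_wsum _ hbp]
      have h2 := hNash ρ.bypass hbp
      have h3 := hWq ρ.bypass.edges.toFinset
      rw [Finset.inter_comm] at h3
      linarith
    have h4 : ρ.bypass.edges.toFinset ⊆ ρ.edges.toFinset := by
      intro g hg; rw [List.mem_toFinset] at hg ⊢; exact Walk.edges_bypass_subset ρ hg
    have h5 : wsum w ρ.bypass = ∑ g ∈ ρ.bypass.edges.toFinset, w g :=
      wsum_eq_sum w hbp.edges_nodup
    have h6 : ∑ g ∈ ρ.bypass.edges.toFinset, w g ≤ ∑ g ∈ ρ.edges.toFinset, w g :=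
      Finset.sum_le_sum_of_subset_of_nonneg h4 fun g _ _ => hw0 g
    have h7 := sum_le_wsum hw0 ρ
    linarith
  have tight_of_slack : ∀ q : G.Walk s t, q.IsPath →
      (∑ g ∈ q.edges.toFinset \ Pfs, c g ≤ ∑ g ∈ Pfs \ q.edges.toFinset, ξ g) →
      wsum w q = W := by
    intro q hq hle
    have h2 := hNash q hq
    have h3 := hWq q.edges.toFinset
    rw [Finset.inter_comm] at h3
    rw [path_wsum _ hq]
    linarith
  have hδ0 : 0 < c e - ξ e - ξo e := by linarith
  haveI : Nonempty (G.Path s t) := ⟨⟨P, hP⟩⟩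
  have hun : (Finset.univ : Finset (G.Path s t)).Nonempty := Finset.univ_nonempty
  -- existence of tight alternative paths
  have exists_tight : ∀ f, f ∈ P.edges →
      (e = f ∨ (0 < ξ f ∧ ord.idxOf e < ord.idxOf f)) →
      ∃ q : G.Walk s t, q.IsPath ∧ e ∉ q.edges ∧ (f ∈ q.edges ∨ e = f) ∧ wsum w q = W := by
    intro f hfP hfc
    by_contra hno
    push_neg at hno
    have hstrict : ∀ q : G.Walk s t, q.IsPath → e ∉ q.edges → (f ∈ q.edges ∨ e = f) →
        ∑ g ∈ Pfs \ q.edges.toFinset, ξ g < ∑ g ∈ q.edges.toFinset \ Pfs, c g := by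
      intro q hq hqe hqf
      rcases lt_or_ge (∑ g ∈ Pfs \ q.edges.toFinset, ξ g)
        (∑ g ∈ q.edges.toFinset \ Pfs, c g) with h | h
      · exact h
      · exact absurd (tight_of_slack q hq h) (hno q hq hqe hqf)
    set εq : ℝ := Finset.univ.inf' hun (fun q' : G.Path s t =>
      if e ∉ q'.1.edges ∧ (f ∈ q'.1.edges ∨ e = f) then
        ∑ g ∈ q'.1.edges.toFinset \ Pfs, c g - ∑ g ∈ Pfs \ q'.1.edges.toFinset, ξ g
      else c e - ξ e - ξo e) with hεqdef
    set εf : ℝ := if e = f then c e - ξ e - ξo e else ξ f with hεfdef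
    set ε : ℝ := min (c e - ξ e - ξo e) (min εf εq) with hεdef
    have hεf0 : 0 < εf := by
      rw [hεfdef]; split_ifs with h
      · exact hδ0
      · rcases hfc with h' | h'
        · exact absurd h' h
        · exact h'.1
    have hεq0 : 0 < εq := by
      rw [hεqdef, Finset.lt_inf'_iff]
      intro q' _
      split_ifs with h
      · linarith [hstrict q'.1 q'.2 h.1 h.2]
      · exact hδ0
    have hε0 : 0 < ε := lt_min hδ0 (lt_min hεf0 hεq0)
    have hεδ : ε ≤ c e - ξ e - ξo e := min_le_left _ _
    have hεεf : ε ≤ εf := le_trans (min_le_right _ _) (min_le_left _ _)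
    have hεεq : ε ≤ εq := le_trans (min_le_right _ _) (min_le_right _ _)
    have hεle : ∀ q : G.Walk s t, q.IsPath → e ∉ q.edges → (f ∈ q.edges ∨ e = f) →
        ε ≤ ∑ g ∈ q.edges.toFinset \ Pfs, c g - ∑ g ∈ Pfs \ q.edges.toFinset, ξ g := by
      intro q hq h1 h2
      have hkey := Finset.inf'_le (s := (Finset.univ : Finset (G.Path s t)))
        (fun q' : G.Path s t =>
          if e ∉ q'.1.edges ∧ (f ∈ q'.1.edges ∨ e = f) then
            ∑ g ∈ q'.1.edges.toFinset \ Pfs, c g - ∑ g ∈ Pfs \ q'.1.edges.toFinset, ξ g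
          else c e - ξ e - ξo e)
        (Finset.mem_univ (⟨q, hq⟩ : G.Path s t))
      have hkey2 : εq ≤ if e ∉ q.edges ∧ (f ∈ q.edges ∨ e = f) then
          ∑ g ∈ q.edges.toFinset \ Pfs, c g - ∑ g ∈ Pfs \ q.edges.toFinset, ξ g
        else c e - ξ e - ξo e := hkey
      rw [if_pos ⟨h1, h2⟩] at hkey2
      exact le_trans hεεq hkey2
    have hfeas' : Feasible2 G c P Q (pushFun ξ e f ε) ξo := by
      have hpv : ∀ g, g ≠ e → g ≠ f → pushFun ξ e f ε g = ξ g := by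
        intro g h1 h2; simp [pushFun, h1, h2]
      have hpe : pushFun ξ e f ε e = ξ e + ε := by simp [pushFun]
      refine ⟨?_, hξo0, ?_, hsuppo, ?_, ?_, hNasho⟩
      · intro g
        by_cases h1 : g = e
        · subst h1; rw [hpe]; have := hξ0 g; linarith
        · by_cases h2 : g = f
          · have hf_ne : ¬ f = e := fun h => h1 (h2.trans h)
            have hpf : pushFun ξ e f ε g = ξ f - ε := by rw [h2]; simp [pushFun, hf_ne]
            rw [hpf]
            have hef : ¬ e = f := fun h => hf_ne h.symm
            rw [hεfdef, if_neg hef] at hεεf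
            linarith [hξ0 f]
          · rw [hpv g h1 h2]; exact hξ0 g
      · intro g hg
        have h1 : g ≠ e := fun h => hg (h ▸ he')
        have h2 : g ≠ f := fun h => hg (h ▸ hfP)
        rw [hpv g h1 h2]; exact hsupp g hg
      · intro g hg
        by_cases h1 : g = e
        · subst h1; rw [hpe]
          have := hcap g hg
          linarith
        · by_cases h2 : g = f
          · have hf_ne : ¬ f = e := fun h => h1 (h2.trans h)
            have hpf : pushFun ξ e f ε g = ξ f - ε := by rw [h2]; simp [pushFun, hf_ne]
            rw [hpf, h2]
            have hcg := hcap g hg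
            rw [h2] at hcg
            linarith
          · rw [hpv g h1 h2]; exact hcap g hg
      · intro q hq
        by_cases hef : e = f
        · subst hef
          rw [sum_pushFun_self]
          by_cases hin : e ∈ Pfs \ q.edges.toFinset
          · rw [if_pos hin]
            have hqe : e ∉ q.edges := fun h =>
              (Finset.mem_sdiff.1 hin).2 (List.mem_toFinset.2 h)
            have := hεle q hq hqe (Or.inr rfl)
            linarith
          · rw [if_neg hin]
            have := hNash q hq
            linarith
        · rw [sum_pushFun_ne hef]
          by_cases h1 : e ∈ Pfs \ q.edges.toFinset
          · by_cases h2 : f ∈ Pfs \ q.edges.toFinset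
            · rw [if_pos h1, if_pos h2]
              have := hNash q hq; linarith
            · rw [if_pos h1, if_neg h2]
              have hqe : e ∉ q.edges := fun h =>
                (Finset.mem_sdiff.1 h1).2 (List.mem_toFinset.2 h)
              have hfPfs : f ∈ Pfs := by rw [hPfs]; exact List.mem_toFinset.2 hfP
              have hqf : f ∈ q.edges := by
                by_contra hnf
                exact h2 (Finset.mem_sdiff.2 ⟨hfPfs, fun h => hnf (List.mem_toFinset.1 h)⟩)
              have := hεle q hq hqe (Or.inl hqf)
              linarith
          · rw [if_neg h1]
            have := hNash q hq
            split_ifs with h2 <;> linarith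
    rcases hfc with hef | ⟨hf0, hidx⟩
    · subst hef
      have hbig := hmax (pushFun ξ e e ε) ξo hfeas'
      simp only [Obj2] at hbig
      rw [sum_pushFun_self] at hbig
      rw [if_pos hePfs] at hbig
      linarith
    · exact hPL e he' f hfP hidx ε hε0 hfeas'
  -- construct the rerouting walk ρ
  obtain ⟨ρ, hwρ, heρ, hcov⟩ : ∃ ρ : G.Walk s t, wsum w ρ ≤ W ∧ e ∉ ρ.edges ∧
      ∀ g ∈ M.edges, g ∉ ρ.edges → ξ g = 0 := by
    by_cases hMp : ∃ g ∈ M.edges, 0 < ξ g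
    · obtain ⟨u, u', hadj, m₁, m₂, heqM, hpred, hm₁⟩ :=
        exists_first_pred_edge (G := G) (fun g => 0 < ξ g) M hMp
      have hg₁M : s(u, u') ∈ M.edges := by
        rw [heqM, Walk.edges_append, Walk.edges_cons]
        exact List.mem_append_right _ List.mem_cons_self
      have hg₁P : s(u, u') ∈ P.edges := by
        rw [hPedges]
        exact List.mem_append_left _ (List.mem_append_right _ hg₁M)
      obtain ⟨q₁, hq₁, heq₁, hfq₁, htq₁⟩ :=
        exists_tight s(u, u') hg₁P (Or.inr ⟨hpred, hord _ hg₁M⟩)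
      have hg₁q : s(u, u') ∈ q₁.edges := by
        rcases hfq₁ with h | h
        · exact h
        · exact absurd (h ▸ hg₁M) heM
      have hu : u ∈ q₁.support := Walk.fst_mem_support_of_mem_edges q₁ hg₁q
      refine ⟨(q₁.takeUntil u hu).append ((Walk.cons hadj m₂).append R), ?_, ?_, ?_⟩
      · have hPeq2 : P = (L.append m₁).append ((Walk.cons hadj m₂).append R) := by
          rw [hPdef, heqM, Walk.append_assoc L m₁ (Walk.cons hadj m₂),
            ← Walk.append_assoc (L.append m₁) (Walk.cons hadj m₂) R]
        have hWP : wsum w P = W := by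
          rw [wsum_eq_sum w hnodupP, hWdef]
          exact Finset.sum_congr rfl fun g hg => hwP g hg
        have h1 := wsum_append w (L.append m₁) ((Walk.cons hadj m₂).append R)
        rw [← hPeq2] at h1
        have h2 := wsum_append w (q₁.takeUntil u hu) (q₁.dropUntil u hu)
        rw [Walk.take_spec q₁ hu, htq₁] at h2
        have h3 := hge ((L.append m₁).append (q₁.dropUntil u hu))
        rw [wsum_append] at h3
        rw [wsum_append]
        linarith
      · intro hmem
        rw [Walk.edges_append, Walk.edges_append] at hmem
        rcases List.mem_append.1 hmem with h | h
        · exact heq₁ (Walk.edges_takeUntil_subset q₁ hu h)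
        · rcases List.mem_append.1 h with h' | h'
          · refine heM ?_
            rw [heqM, Walk.edges_append]
            exact List.mem_append_right _ h'
          · exact heR h'
      · intro g hgM hgρ
        rw [heqM, Walk.edges_append] at hgM
        rcases List.mem_append.1 hgM with h | h
        · exact le_antisymm (not_lt.1 (hm₁ g h)) (hξ0 g)
        · exfalso
          apply hgρ
          rw [Walk.edges_append, Walk.edges_append]
          exact List.mem_append_right _ (List.mem_append_left _ h)
    · push_neg at hMp
      obtain ⟨q₀, hq₀, heq₀, -, htq₀⟩ := exists_tight e he' (Or.inl rfl)
      exact ⟨q₀, le_of_eq htq₀, heq₀, fun g hg _ => le_antisymm (hMp g hg) (hξ0 g)⟩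
  -- the improved forest
  set ρfs : Finset (Sym2 V) := ρ.edges.toFinset with hρfs
  set D : Finset (Sym2 V) := (Pfs \ ρfs) \ Mfs with hDdef
  set Ffs : Finset (Sym2 V) := Pfs ∪ Qfs with hFdef
  set S : Finset (Sym2 V) := (Ffs ∪ ρfs) \ D with hSdef
  have hSsub : ↑S ⊆ G.edgeSet := by
    intro g hg
    obtain ⟨hg1, -⟩ := Finset.mem_sdiff.1 (Finset.mem_coe.1 hg)
    rcases Finset.mem_union.1 hg1 with h | h
    · rcases Finset.mem_union.1 h with h' | h'
      · exact Walk.edges_subset_edgeSet P (List.mem_toFinset.1 h')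
      · exact Walk.edges_subset_edgeSet Q (List.mem_toFinset.1 h')
    · exact Walk.edges_subset_edgeSet ρ (List.mem_toFinset.1 h)
  have hwit1 : ∃ p : G.Walk s t, ∀ g ∈ p.edges, g ∈ S := by
    refine ⟨ρ, fun g hg => Finset.mem_sdiff.2
      ⟨Finset.mem_union_right _ (List.mem_toFinset.2 hg), ?_⟩⟩
    intro hDg
    exact (Finset.mem_sdiff.1 (Finset.mem_sdiff.1 hDg).1).2 (List.mem_toFinset.2 hg)
  have hwit2 : ∃ p : G.Walk so tp, ∀ g ∈ p.edges, g ∈ S := by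
    refine ⟨Q, fun g hg => Finset.mem_sdiff.2
      ⟨Finset.mem_union_left _ (Finset.mem_union_right _ (List.mem_toFinset.2 hg)), ?_⟩⟩
    intro hDg
    obtain ⟨hgP, hgM⟩ := Finset.mem_sdiff.1 hDg
    exact hgM (List.mem_toFinset.2
      (hmeet g (List.mem_toFinset.1 (Finset.mem_sdiff.1 hgP).1) hg))
  have hcost := hmin S hSsub hwit1 hwit2
  have hDFsub : D ⊆ Ffs ∪ ρfs := by
    intro g hg
    exact Finset.mem_union_left _ (Finset.mem_union_left _
      (Finset.mem_sdiff.1 (Finset.mem_sdiff.1 hg).1).1)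
  have hsd := Finset.sum_sdiff (f := c) hDFsub
  have hsplit : ∑ g ∈ Ffs ∪ ρfs, c g = ∑ g ∈ Ffs, c g + ∑ g ∈ ρfs \ Ffs, c g := by
    rw [← Finset.sum_union Finset.disjoint_sdiff, Finset.union_sdiff_self_eq_union]
  have h1 : ∑ g ∈ ρfs \ Ffs, c g ≤ ∑ g ∈ ρfs \ Pfs, c g := by
    refine Finset.sum_le_sum_of_subset_of_nonneg
      (Finset.sdiff_subset_sdiff subset_rfl ?_) fun g _ _ => hc g
    exact Finset.subset_union_left
  have h2 : ∑ g ∈ ρfs \ Pfs, c g = ∑ g ∈ ρfs \ Pfs, w g :=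
    (Finset.sum_congr rfl fun g hg => hwNP g (Finset.mem_sdiff.1 hg).2).symm
  have h3 : ∑ g ∈ ρfs ∩ Pfs, w g = ∑ g ∈ ρfs ∩ Pfs, ξ g :=
    Finset.sum_congr rfl fun g hg => hwP g (Finset.mem_inter.1 hg).2
  have h4 := Finset.sum_inter_add_sum_sdiff ρfs Pfs w
  have h5 : ∑ g ∈ ρfs, w g ≤ W := le_trans (sum_le_wsum hw0 ρ) hwρ
  have h6 := Finset.sum_inter_add_sum_sdiff Pfs ρfs ξ
  have h7 : ∑ g ∈ ρfs ∩ Pfs, ξ g = ∑ g ∈ Pfs ∩ ρfs, ξ g := by rw [Finset.inter_comm]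
  have h8 := Finset.sum_inter_add_sum_sdiff (Pfs \ ρfs) Mfs ξ
  have h9 : ∑ g ∈ (Pfs \ ρfs) ∩ Mfs, ξ g = 0 := by
    refine Finset.sum_eq_zero fun g hg => ?_
    obtain ⟨hg1, hg2⟩ := Finset.mem_inter.1 hg
    exact hcov g (List.mem_toFinset.1 hg2)
      fun h => (Finset.mem_sdiff.1 hg1).2 (List.mem_toFinset.2 h)
  have heD : e ∈ D :=
    Finset.mem_sdiff.2 ⟨Finset.mem_sdiff.2 ⟨hePfs, fun h => heρ (List.mem_toFinset.1 h)⟩,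
      fun h => heM (List.mem_toFinset.1 h)⟩
  have h10 : c e - ξ e ≤ ∑ g ∈ D, c g - ∑ g ∈ D, ξ g := by
    have hnn : ∀ g ∈ D, 0 ≤ c g - ξ g := by
      intro g hg
      have hgP : g ∈ Pfs := (Finset.mem_sdiff.1 (Finset.mem_sdiff.1 hg).1).1
      have hca := hcap g (Finset.mem_union_left _ hgP)
      have := hξo0 g
      linarith
    have hle := Finset.single_le_sum hnn heD
    rw [Finset.sum_sub_distrib] at hle
    linarith
  have hWval : W = ∑ g ∈ Pfs, ξ g := hWdef
  have hSc : cost c S + ∑ g ∈ D, c g = ∑ g ∈ Ffs ∪ ρfs, c g := by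
    simpa [cost] using hsd
  have hFc : cost c Ffs = ∑ g ∈ Ffs, c g := by simp [cost]
  have hδe : 0 < c e - ξ e := by have := hξo0 e; linarith
  linarith [hcost, hsd, hsplit, h1, h2, h3, h4, h5, h6, h7, h8, h9, h10, hSc, hFc]

end KeyLemma


set_option maxHeartbeats 2000000 in
/-- Case L.  Let `F` be an optimal Steiner forest whose two
paths `P₁ = L₁ ++ M ++ R₁` and `P₂ = L₂ ++ M ++ R₂` meet exactly in the
nonempty middle part `M`, let `(ξ₁, ξ₂)` be a pushed-to-the-left optimal
solution of LP(F), and let `k` be the position of the first edge of `F` (in the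
ordering `L₁, L₂, M, R₁, R₂`) that is not completely paid.  Then this edge does
not lie in the left part, i.e. `ord(e) > ℓ₁ + ℓ₂`. -/
theorem first_unpaid_not_in_left_part [Fintype V]
    {a b : V} (G : SimpleGraph V) (s₁ t₁ s₂ t₂ : V) (c : Sym2 V → ℝ)
    (hc : ∀ e, 0 ≤ c e)
    (L₁ : G.Walk s₁ a) (M : G.Walk a b) (R₁ : G.Walk b t₁)
    (L₂ : G.Walk s₂ a) (R₂ : G.Walk b t₂)
    (hP₁ : ((L₁.append M).append R₁).IsPath)
    (hP₂ : ((L₂.append M).append R₂).IsPath)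
    (hM_ne : M.edges ≠ [])
    (hmeet : ∀ e, e ∈ ((L₁.append M).append R₁).edges →
      e ∈ ((L₂.append M).append R₂).edges → e ∈ M.edges)
    (hOpt : IsOptimalSteinerForest G s₁ t₁ s₂ t₂ c
      (((L₁.append M).append R₁).edges.toFinset ∪ ((L₂.append M).append R₂).edges.toFinset))
    (ξ₁ ξ₂ : Sym2 V → ℝ)
    (hLP : Optimal2 G c ((L₁.append M).append R₁) ((L₂.append M).append R₂) ξ₁ ξ₂)
    (hPL : PushedLeft G c ((L₁.append M).append R₁) ((L₂.append M).append R₂)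
      (ordList G L₁ M R₁ L₂ R₂) ξ₁ ξ₂)
    (k : ℕ)
    (hk : FirstUnpaid c (ordList G L₁ M R₁ L₂ R₂) ξ₁ ξ₂ k) :
    L₁.edges.length + L₂.edges.length ≤ k := by
  classical
  by_contra hcon
  push_neg at hcon
  set P₁ : G.Walk s₁ t₁ := (L₁.append M).append R₁ with hP₁def
  set P₂ : G.Walk s₂ t₂ := (L₂.append M).append R₂ with hP₂def
  set ord : List (Sym2 V) := ordList G L₁ M R₁ L₂ R₂ with horddef
  have horde : ord = (((L₁.edges ++ L₂.edges) ++ M.edges) ++ R₁.edges) ++ R₂.edges := rfl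
  obtain ⟨hklen, hkunpaid, -⟩ := hk
  obtain ⟨e, he_some⟩ : ∃ e', ord[k]? = some e' :=
    ⟨ord[k]'hklen, List.getElem?_eq_getElem hklen⟩
  have hunpaid : ¬ Paid c ξ₁ ξ₂ e := hkunpaid e he_some
  -- structural facts about the two paths
  have hP₁e : P₁.edges = (L₁.edges ++ M.edges) ++ R₁.edges := by
    rw [hP₁def, SimpleGraph.Walk.edges_append, SimpleGraph.Walk.edges_append]
  have hP₂e : P₂.edges = (L₂.edges ++ M.edges) ++ R₂.edges := by
    rw [hP₂def, SimpleGraph.Walk.edges_append, SimpleGraph.Walk.edges_append]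
  have hnd₁ : ((L₁.edges ++ M.edges) ++ R₁.edges).Nodup := hP₁e ▸ hP₁.edges_nodup
  have hnd₂ : ((L₂.edges ++ M.edges) ++ R₂.edges).Nodup := hP₂e ▸ hP₂.edges_nodup
  have dL₁M : L₁.edges.Disjoint M.edges := fun g hg hg' =>
    (List.nodup_append.1 (List.nodup_append.1 hnd₁).1).2.2 g hg g hg' rfl
  have dL₂M : L₂.edges.Disjoint M.edges := fun g hg hg' =>
    (List.nodup_append.1 (List.nodup_append.1 hnd₂).1).2.2 g hg g hg' rfl
  have dL₁L₂ : L₁.edges.Disjoint L₂.edges := by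
    intro g hg1 hg2
    have hgP₁ : g ∈ P₁.edges := by
      rw [hP₁e]; exact List.mem_append_left _ (List.mem_append_left _ hg1)
    have hgP₂ : g ∈ P₂.edges := by
      rw [hP₂e]; exact List.mem_append_left _ (List.mem_append_left _ hg2)
    exact dL₁M hg1 (hmeet g hgP₁ hgP₂)
  -- the minimality property shared by both cases
  have hminc : ∀ S : Finset (Sym2 V), ↑S ⊆ G.edgeSet →
      (∃ p : G.Walk s₁ t₁, ∀ g ∈ p.edges, g ∈ S) →
      (∃ p : G.Walk s₂ t₂, ∀ g ∈ p.edges, g ∈ S) →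
      cost c (P₁.edges.toFinset ∪ P₂.edges.toFinset) ≤ cost c S := by
    intro S hS h1 h2
    obtain ⟨F', hF'sub, hF'⟩ := exists_steiner_subset G s₁ t₁ s₂ t₂ S hS h1 h2
    exact le_trans (hOpt.2 F' hF') (cost_mono hc hF'sub)
  -- index bound for middle edges
  have hidxM : ∀ g ∈ M.edges,
      (L₁.edges ++ L₂.edges).length ≤ ord.idxOf g := by
    intro g hgM
    have hg3 : g ∈ (L₁.edges ++ L₂.edges) ++ M.edges := List.mem_append_right _ hgM
    have hg4 : g ∈ ((L₁.edges ++ L₂.edges) ++ M.edges) ++ R₁.edges :=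
      List.mem_append_left _ hg3
    have hnotg : g ∉ L₁.edges ++ L₂.edges := by
      intro h
      rcases List.mem_append.1 h with h' | h'
      · exact dL₁M h' hgM
      · exact dL₂M h' hgM
    rw [horde, List.idxOf_append_of_mem hg4, List.idxOf_append_of_mem hg3,
      List.idxOf_append_of_notMem hnotg]
    omega
  rcases lt_or_ge k L₁.edges.length with hkl | hkl
  · -- Case A : e lies on L₁, the private left part of player 1
    have hkl1 : k < (L₁.edges ++ L₂.edges).length := by
      rw [List.length_append]; omega
    have hkl2 : k < ((L₁.edges ++ L₂.edges) ++ M.edges).length := by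
      rw [List.length_append]; omega
    have hkl3 : k < (((L₁.edges ++ L₂.edges) ++ M.edges) ++ R₁.edges).length := by
      rw [List.length_append]; omega
    have heL₁ : e ∈ L₁.edges := by
      apply List.mem_of_getElem? (i := k)
      rw [← he_some, horde, List.getElem?_append, if_pos hkl3, List.getElem?_append,
        if_pos hkl2, List.getElem?_append, if_pos hkl1, List.getElem?_append, if_pos hkl]
    have he₁P : e ∈ P₁.edges := by
      rw [hP₁e]; exact List.mem_append_left _ (List.mem_append_left _ heL₁)
    have hδA : ξ₁ e + ξ₂ e < c e := by
      have hcap := hLP.1.2.2.2.2.1 e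
        (Finset.mem_union_left _ (List.mem_toFinset.2 he₁P))
      exact lt_of_le_of_ne hcap fun h => hunpaid h
    have hordA : ∀ g ∈ M.edges, ord.idxOf e < ord.idxOf g := by
      intro g hgM
      have h1 : e ∈ ((L₁.edges ++ L₂.edges) ++ M.edges) ++ R₁.edges :=
        List.mem_append_left _ (List.mem_append_left _ (List.mem_append_left _ heL₁))
      have h2 : e ∈ (L₁.edges ++ L₂.edges) ++ M.edges :=
        List.mem_append_left _ (List.mem_append_left _ heL₁)
      have h3 : e ∈ L₁.edges ++ L₂.edges := List.mem_append_left _ heL₁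
      have hidxe : ord.idxOf e = L₁.edges.idxOf e := by
        rw [horde, List.idxOf_append_of_mem h1, List.idxOf_append_of_mem h2,
          List.idxOf_append_of_mem h3, List.idxOf_append_of_mem heL₁]
      have he_lt : L₁.edges.idxOf e < L₁.edges.length := List.idxOf_lt_length_iff.2 heL₁
      have := hidxM g hgM
      rw [List.length_append] at this
      omega
    exact absurd (key_no_unpaid_left hc L₁ M R₁ P₂ hP₁ hP₂ hmeet ξ₁ ξ₂ hLP ord hPL.1
      e heL₁ hδA hordA hminc) not_false
  · -- Case B : e lies on L₂, the private left part of player 2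
    have hkl2 : k < ((L₁.edges ++ L₂.edges) ++ M.edges).length := by
      rw [List.length_append, List.length_append]; omega
    have hkl3 : k < (((L₁.edges ++ L₂.edges) ++ M.edges) ++ R₁.edges).length := by
      rw [List.length_append]; omega
    have hkl1 : k < (L₁.edges ++ L₂.edges).length := by
      rw [List.length_append]; omega
    have heL₂ : e ∈ L₂.edges := by
      apply List.mem_of_getElem? (i := k - L₁.edges.length)
      rw [← he_some, horde, List.getElem?_append, if_pos hkl3, List.getElem?_append,
        if_pos hkl2, List.getElem?_append, if_pos hkl1, List.getElem?_append_right hkl]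
    have he₂P : e ∈ P₂.edges := by
      rw [hP₂e]; exact List.mem_append_left _ (List.mem_append_left _ heL₂)
    have hδB : ξ₂ e + ξ₁ e < c e := by
      have hcap := hLP.1.2.2.2.2.1 e
        (Finset.mem_union_right _ (List.mem_toFinset.2 he₂P))
      have : ξ₁ e + ξ₂ e < c e := lt_of_le_of_ne hcap fun h => hunpaid h
      linarith
    have hmeet' : ∀ g ∈ P₂.edges, g ∈ P₁.edges → g ∈ M.edges := fun g h2 h1 =>
      hmeet g h1 h2
    have hPL' : ∀ e' ∈ P₂.edges, ∀ f' ∈ P₂.edges,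
        ord.idxOf e' < ord.idxOf f' → ∀ ε : ℝ, 0 < ε →
        ¬ Feasible2 G c P₂ P₁ (pushFun ξ₂ e' f' ε) ξ₁ := by
      intro e' he' f' hf' hidx ε hε hfe
      exact hPL.2 e' he' f' hf' hidx ε hε (Feasible2_swap hfe)
    have hordB : ∀ g ∈ M.edges, ord.idxOf e < ord.idxOf g := by
      intro g hgM
      have h1 : e ∈ ((L₁.edges ++ L₂.edges) ++ M.edges) ++ R₁.edges :=
        List.mem_append_left _ (List.mem_append_left _ (List.mem_append_right _ heL₂))
      have h2 : e ∈ (L₁.edges ++ L₂.edges) ++ M.edges :=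
        List.mem_append_left _ (List.mem_append_right _ heL₂)
      have h3 : e ∈ L₁.edges ++ L₂.edges := List.mem_append_right _ heL₂
      have heL₁' : e ∉ L₁.edges := fun h => dL₁L₂ h heL₂
      have hidxe : ord.idxOf e = L₁.edges.length + L₂.edges.idxOf e := by
        rw [horde, List.idxOf_append_of_mem h1, List.idxOf_append_of_mem h2,
          List.idxOf_append_of_mem h3, List.idxOf_append_of_notMem heL₁']
      have he_lt : L₂.edges.idxOf e < L₂.edges.length := List.idxOf_lt_length_iff.2 heL₂
      have := hidxM g hgM
      rw [List.length_append] at this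
      omega
    have hminB : ∀ S : Finset (Sym2 V), ↑S ⊆ G.edgeSet →
        (∃ p : G.Walk s₂ t₂, ∀ g ∈ p.edges, g ∈ S) →
        (∃ p : G.Walk s₁ t₁, ∀ g ∈ p.edges, g ∈ S) →
        cost c (P₂.edges.toFinset ∪ P₁.edges.toFinset) ≤ cost c S := by
      intro S hS h2 h1
      rw [Finset.union_comm]
      exact hminc S hS h1 h2
    exact absurd (key_no_unpaid_left hc L₂ M R₂ P₁ hP₂ hP₁ hmeet' ξ₂ ξ₁
      (Optimal2_swap hLP) ord hPL' e heL₂ hδB hordB hminB) not_false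

end NDG
end

section
/- In an NBC1 configuration whose underlying paths form an optimal Steiner forest and whose three paths q_1,q_2,q_3 are tight alternatives with respect to a feasible LP(F) cost-share assignment in which all commonly used edges are completely paid, the following hold: (i) every edge substituted by q_1 or by q_3 is completely paid; (ii) the player whose terminal pair is (u,v) fully pays (her cost share equals the full edge cost on) every commonly used edge that is substituted by q_1 but not by q_3. -/
namespace NDG

variable {V : Type*} [DecidableEq V]

/-- A preliminary bad configuration (PBC) for the terminal pairs `(u,v)` and
`(w,x)`: the path `P_u = Lu ++ M ++ Ru` of one player and the path
`P_ℓ = Ll ++ M ++ Rl` of the other player meet exactly in the nonempty,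
consistently oriented common subpath `M`; `q₁` closes a unique cycle with `P_u`
(intersecting it in the segment `S1`, which contains edges of `R_u` and of `M`),
`q₂` and `q₃` close unique cycles with `P_ℓ` (intersecting it in the segments
`S2` resp. `S3`, containing edges of `L_ℓ` resp. `R_ℓ` and of `M`, and missing
part of `M`); moreover `C := C₂ ∩ C₃ ∩ M` is nonempty and contained in `C₁`, and
`(M ∩ C₁ ∩ C₂) \ C` and `(M ∩ C₁ ∩ C₃) \ C` each contain an edge. -/
structure PBC (G : SimpleGraph V) (u v w x : V) where
  a : V
  b : V
  Lu : G.Walk u a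
  M : G.Walk a b
  Ru : G.Walk b v
  Ll : G.Walk w a
  Rl : G.Walk b x
  hM_ne : M.edges ≠ []
  hPu : ((Lu.append M).append Ru).IsPath
  hPl : ((Ll.append M).append Rl).IsPath
  hforest : (SimpleGraph.fromEdgeSet
      {e | e ∈ ((Lu.append M).append Ru).edges ∨ e ∈ ((Ll.append M).append Rl).edges}).IsAcyclic
  hmeet : ∀ e, e ∈ ((Lu.append M).append Ru).edges →
      e ∈ ((Ll.append M).append Rl).edges → e ∈ M.edges
  hRu_ne : Ru.edges ≠ []
  hLl_ne : Ll.edges ≠ []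
  hRl_ne : Rl.edges ≠ []
  a1 : V
  b1 : V
  q1 : G.Walk a1 b1
  S1 : G.Walk a1 b1
  hq1path : q1.IsPath
  hq1_ne : q1.edges ≠ []
  hS1 : S1.darts <:+: ((Lu.append M).append Ru).darts
  hq1closes : ∀ y ∈ q1.support, y ∈ ((Lu.append M).append Ru).support → y = a1 ∨ y = b1
  hC1Ru : ∃ e ∈ S1.edges, e ∈ Ru.edges
  hC1M : ∃ e ∈ S1.edges, e ∈ M.edges
  a2 : V
  b2 : V
  q2 : G.Walk a2 b2
  S2 : G.Walk a2 b2
  hq2path : q2.IsPath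
  hq2_ne : q2.edges ≠ []
  hS2 : S2.darts <:+: ((Ll.append M).append Rl).darts
  hq2closes : ∀ y ∈ q2.support, y ∈ ((Ll.append M).append Rl).support → y = a2 ∨ y = b2
  hC2Ll : ∃ e ∈ S2.edges, e ∈ Ll.edges
  hC2M : ∃ e ∈ S2.edges, e ∈ M.edges
  hMC2 : ∃ e ∈ M.edges, e ∉ S2.edges
  a3 : V
  b3 : V
  q3 : G.Walk a3 b3
  S3 : G.Walk a3 b3
  hq3path : q3.IsPath
  hq3_ne : q3.edges ≠ []
  hS3 : S3.darts <:+: ((Ll.append M).append Rl).darts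
  hq3closes : ∀ y ∈ q3.support, y ∈ ((Ll.append M).append Rl).support → y = a3 ∨ y = b3
  hC3Rl : ∃ e ∈ S3.edges, e ∈ Rl.edges
  hC3M : ∃ e ∈ S3.edges, e ∈ M.edges
  hMC3 : ∃ e ∈ M.edges, e ∉ S3.edges
  hC_ne : ∃ e ∈ M.edges, e ∈ S2.edges ∧ e ∈ S3.edges
  hC_sub : ∀ e ∈ M.edges, e ∈ S2.edges → e ∈ S3.edges → e ∈ S1.edges
  hC1C2 : ∃ e ∈ M.edges, e ∈ S1.edges ∧ e ∈ S2.edges ∧ e ∉ S3.edges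
  hC1C3 : ∃ e ∈ M.edges, e ∈ S1.edges ∧ e ∈ S3.edges ∧ e ∉ S2.edges

namespace PBC

variable {G : SimpleGraph V} {u v w x : V}

/-- The path of the "upper" player (terminals `u`, `v`). -/
def Pu (B : PBC G u v w x) : G.Walk u v := (B.Lu.append B.M).append B.Ru

/-- The path of the "lower" player (terminals `w`, `x`). -/
def Pl (B : PBC G u v w x) : G.Walk w x := (B.Ll.append B.M).append B.Rl

/-- `q₁` is small: the cycle `C₁` contains no edge of `L_u`. -/
def Small (B : PBC G u v w x) : Prop := ∀ e ∈ B.S1.edges, e ∉ B.Lu.edges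

/-- `q₁` is big: the cycle `C₁` contains an edge of `L_u`. -/
def Big (B : PBC G u v w x) : Prop := ∃ e ∈ B.S1.edges, e ∈ B.Lu.edges

/-- Node-disjointness of two walks. -/
def NodeDisj {y z y' z' : V} (p : G.Walk y z) (q : G.Walk y' z') : Prop :=
  ∀ s ∈ p.support, s ∉ q.support

/-- `q` is internally node-disjoint from `P_u ∪ P_ℓ`. -/
def InternDisj (B : PBC G u v w x) {y z : V} (q : G.Walk y z) : Prop :=
  ∀ s ∈ q.support, s ≠ y → s ≠ z → s ∉ B.Pu.support ∧ s ∉ B.Pl.support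

/-- The two walks intersect exactly in a common (possibly reversed) subpath. -/
def CommonMid {y z y' z' : V} (p : G.Walk y z) (q : G.Walk y' z') : Prop :=
  ∃ (c d : V) (m : G.Walk c d), m.IsPath ∧
    m.darts <:+: p.darts ∧ (m.darts <:+: q.darts ∨ m.reverse.darts <:+: q.darts) ∧
    ∀ s, s ∈ p.support → s ∈ q.support → s ∈ m.support

/-- `q` contains no node of `L_u` or `R_u`. -/
def AvoidsUpperOuter (B : PBC G u v w x) {y z : V} (q : G.Walk y z) : Prop :=
  ∀ s ∈ q.support, s ∉ B.Lu.support ∧ s ∉ B.Ru.support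

/-- In BC3/BC4, `q₁` avoids `R_ℓ` and the start node of `q₂`, and its initial
segment `α₁` (up to the last node contained in `L_ℓ`) runs inside the cycle
`C₂` along `L_ℓ`. -/
def LlTraverse (B : PBC G u v w x) : Prop :=
  (∀ s ∈ B.q1.support, s ∉ B.Rl.support) ∧
  B.a2 ∉ B.q1.support ∧
  ∃ (y : V) (α : G.Walk B.a1 y) (β : G.Walk y B.b1),
    B.q1 = α.append β ∧ y ∈ B.Ll.support ∧
    (∀ e ∈ α.edges, e ∈ B.S2.edges) ∧
    (∀ s ∈ β.support, s ∈ B.Ll.support → s = y)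

/-- Types BC1a (`q₁` small) and BC1b (`q₁` big): `q₁,q₂,q₃` pairwise
node-disjoint and internally node-disjoint from `P_u ∪ P_ℓ`. -/
def BC1 (B : PBC G u v w x) : Prop :=
  NodeDisj B.q1 B.q2 ∧ NodeDisj B.q1 B.q3 ∧ NodeDisj B.q2 B.q3 ∧
  B.InternDisj B.q1 ∧ B.InternDisj B.q2 ∧ B.InternDisj B.q3

/-- Types BC2a–d: `q₃` node-disjoint with `q₁` and `q₂`; `q₁` and `q₂` overlap
exactly in a common subpath (`α₂ = β₂`); everything internally node-disjoint
from `P_u ∪ P_ℓ` (the subtypes corresponding to `q₁` small/big and the two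
orientations of the common subpath are subsumed). -/
def BC2 (B : PBC G u v w x) : Prop :=
  NodeDisj B.q3 B.q1 ∧ NodeDisj B.q3 B.q2 ∧
  ¬ NodeDisj B.q1 B.q2 ∧ CommonMid B.q1 B.q2 ∧
  B.InternDisj B.q1 ∧ B.InternDisj B.q2 ∧ B.InternDisj B.q3

/-- Type BC3. -/
def BC3 (B : PBC G u v w x) : Prop :=
  B.Small ∧ (∀ e ∈ B.M.edges, e ∈ B.S1.edges) ∧
  NodeDisj B.q1 B.q2 ∧ NodeDisj B.q1 B.q3 ∧ NodeDisj B.q2 B.q3 ∧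
  B.AvoidsUpperOuter B.q2 ∧ B.AvoidsUpperOuter B.q3 ∧
  B.LlTraverse

/-- Types BC4a/b. -/
def BC4 (B : PBC G u v w x) : Prop :=
  B.Small ∧ (∀ e ∈ B.M.edges, e ∈ B.S1.edges) ∧
  NodeDisj B.q3 B.q1 ∧ NodeDisj B.q3 B.q2 ∧
  ¬ NodeDisj B.q1 B.q2 ∧ CommonMid B.q1 B.q2 ∧
  B.AvoidsUpperOuter B.q2 ∧ B.AvoidsUpperOuter B.q3 ∧
  B.LlTraverse

/-- A PBC is a bad configuration if it is of one of the nine types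
BC1a, BC1b, BC2a, BC2b, BC2c, BC2d, BC3, BC4a, BC4b. -/
def IsBC (B : PBC G u v w x) : Prop := B.BC1 ∨ B.BC2 ∨ B.BC3 ∨ B.BC4

end PBC

/-- `(G,(s₁,t₁),(s₂,t₂))` contains a subgraph which is a bad configuration,
for some assignment of the terminal pairs to `(u,v)` and `(w,x)`. -/
def ContainsBC (G : SimpleGraph V) (s₁ t₁ s₂ t₂ : V) : Prop :=
  (∃ B : PBC G s₁ t₁ s₂ t₂, B.IsBC) ∨ (∃ B : PBC G s₁ t₁ t₂ s₂, B.IsBC) ∨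
  (∃ B : PBC G t₁ s₁ s₂ t₂, B.IsBC) ∨ (∃ B : PBC G t₁ s₁ t₂ s₂, B.IsBC) ∨
  (∃ B : PBC G s₂ t₂ s₁ t₁, B.IsBC) ∨ (∃ B : PBC G s₂ t₂ t₁ s₁, B.IsBC) ∨
  (∃ B : PBC G t₂ s₂ s₁ t₁, B.IsBC) ∨ (∃ B : PBC G t₂ s₂ t₁ s₁, B.IsBC)

namespace PBC

variable {G : SimpleGraph V} {u v w x : V}

/-- A node of `L_ℓ` is substituted by `q₂` if it is an internal node of the
intersection `S2` of the cycle `C₂` with `P_ℓ`. -/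
def SubstitutedByQ2 (B : PBC G u v w x) (s : V) : Prop :=
  s ∈ B.S2.support ∧ s ≠ B.a2 ∧ s ≠ B.b2

/-- A node of `R_ℓ` is substituted by `q₃` if it is an internal node of the
intersection `S3` of the cycle `C₃` with `P_ℓ`. -/
def SubstitutedByQ3 (B : PBC G u v w x) (s : V) : Prop :=
  s ∈ B.S3.support ∧ s ≠ B.a3 ∧ s ≠ B.b3

/-- NBC1: `q₁` small and `q₁`, `q₃` not node-disjoint. -/
def NBC1 (B : PBC G u v w x) : Prop :=
  B.Small ∧ ∃ s ∈ B.q1.support, s ∈ B.q3.support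

/-- NBC2: `q₂`, `q₃` not node-disjoint. -/
def NBC2 (B : PBC G u v w x) : Prop :=
  ∃ s ∈ B.q2.support, s ∈ B.q3.support

/-- NBC3: `q₂` contains an internal node of `L_u` or of `R_u`. -/
def NBC3 (B : PBC G u v w x) : Prop :=
  ∃ s ∈ B.q2.support,
    (s ∈ B.Lu.support ∧ s ≠ u ∧ s ≠ B.a) ∨ (s ∈ B.Ru.support ∧ s ≠ B.b ∧ s ≠ v)

/-- NBC4: `q₃` contains an internal node of `L_u` or of `R_u`. -/
def NBC4 (B : PBC G u v w x) : Prop :=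
  ∃ s ∈ B.q3.support,
    (s ∈ B.Lu.support ∧ s ≠ u ∧ s ≠ B.a) ∨ (s ∈ B.Ru.support ∧ s ≠ B.b ∧ s ≠ v)

/-- NBC5: `q₁` contains a node of `L_ℓ` and a node of `R_ℓ`. -/
def NBC5 (B : PBC G u v w x) : Prop :=
  (∃ s ∈ B.q1.support, s ∈ B.Ll.support ∧ s ≠ B.a) ∧
  (∃ s ∈ B.q1.support, s ∈ B.Rl.support ∧ s ≠ B.b)

/-- NBC6: `q₁` small and `q₁` contains a node of `R_ℓ`. -/
def NBC6 (B : PBC G u v w x) : Prop :=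
  B.Small ∧ ∃ s ∈ B.q1.support, s ∈ B.Rl.support ∧ s ≠ B.b

/-- NBC7: `q₁` big and `q₁` contains a node of `R_ℓ` not substituted by `q₃`. -/
def NBC7 (B : PBC G u v w x) : Prop :=
  B.Big ∧ ∃ s ∈ B.q1.support, s ∈ B.Rl.support ∧ s ≠ B.b ∧ ¬ B.SubstitutedByQ3 s

/-- NBC8: `q₁` big and either `q₁` is not node-disjoint with `q₂` and contains
a node of `R_ℓ` substituted by `q₃`, or `q₁` is not node-disjoint with `q₃` and
contains a node of `L_ℓ` substituted by `q₂`. -/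
def NBC8 (B : PBC G u v w x) : Prop :=
  B.Big ∧
  ((¬ NodeDisj B.q1 B.q2 ∧
      ∃ s ∈ B.q1.support, s ∈ B.Rl.support ∧ s ≠ B.b ∧ B.SubstitutedByQ3 s) ∨
   (¬ NodeDisj B.q1 B.q3 ∧
      ∃ s ∈ B.q1.support, s ∈ B.Ll.support ∧ s ≠ B.a ∧ B.SubstitutedByQ2 s))

/-- NBC9: `q₁` contains a node of `L_ℓ` not substituted by `q₂`. -/
def NBC9 (B : PBC G u v w x) : Prop :=
  ∃ s ∈ B.q1.support, s ∈ B.Ll.support ∧ s ≠ B.a ∧ ¬ B.SubstitutedByQ2 s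

/-- NBC10: `q₁` small and `q₁` (directed from left to right) contains a node of
`L_ℓ` substituted by `q₂` after a node of `q₂`. -/
def NBC10 (B : PBC G u v w x) : Prop :=
  B.Small ∧ ∃ z y : V, z ∈ B.q2.support ∧
    y ∈ B.Ll.support ∧ y ≠ B.a ∧ B.SubstitutedByQ2 y ∧ [z, y].Sublist B.q1.support

/-- NBC11: `q₁` big and either `q₁` (directed) contains a node of `L_ℓ`
substituted by `q₂` after a node of `q₂`, or `q₁` (directed) contains a node of
`q₃` after a node of `R_ℓ` substituted by `q₃`. -/
def NBC11 (B : PBC G u v w x) : Prop :=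
  B.Big ∧
  ((∃ z y : V, z ∈ B.q2.support ∧
      y ∈ B.Ll.support ∧ y ≠ B.a ∧ B.SubstitutedByQ2 y ∧ [z, y].Sublist B.q1.support) ∨
   (∃ z y : V, z ∈ B.Rl.support ∧ z ≠ B.b ∧ B.SubstitutedByQ3 z ∧
      y ∈ B.q3.support ∧ [z, y].Sublist B.q1.support))

/-- NBC12: `q₁` big, not node-disjoint with `q₂` and not node-disjoint
with `q₃`. -/
def NBC12 (B : PBC G u v w x) : Prop :=
  B.Big ∧ ¬ NodeDisj B.q1 B.q2 ∧ ¬ NodeDisj B.q1 B.q3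

/-- A PBC is a No Bad Configuration if it is of one of the twelve types
NBC1–NBC12. -/
def IsNBC (B : PBC G u v w x) : Prop :=
  B.NBC1 ∨ B.NBC2 ∨ B.NBC3 ∨ B.NBC4 ∨ B.NBC5 ∨ B.NBC6 ∨
  B.NBC7 ∨ B.NBC8 ∨ B.NBC9 ∨ B.NBC10 ∨ B.NBC11 ∨ B.NBC12

end PBC

/- ### Auxiliary lemmas for the proof of Statement 16 -/

section Helpers

lemma nodup_prefix_eq_of_getLast {α : Type*} {l p1 p2 : List α} (hl : l.Nodup)
    (h1 : p1 <+: l) (h2 : p2 <+: l) (ne1 : p1 ≠ []) (ne2 : p2 ≠ [])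
    (he : p1.getLast ne1 = p2.getLast ne2) : p1 = p2 := by
  have key : ∀ (q1 q2 : List α), (hq : q1 <+: q2) → q2 <+: l →
      (n1 : q1 ≠ []) → (n2 : q2 ≠ []) → q1.getLast n1 = q2.getLast n2 → q1 = q2 := by
    rintro q1 q2 ⟨r, rfl⟩ hq2 n1 n2 hlast
    rcases eq_or_ne r [] with rfl | hr
    · simp
    · exfalso
      have hnd : (q1 ++ r).Nodup := hq2.sublist.nodup hl
      have hdisj := List.disjoint_of_nodup_append hnd
      have h1' : (q1 ++ r).getLast n2 ∈ q1 := hlast ▸ List.getLast_mem n1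
      have h2' : (q1 ++ r).getLast n2 ∈ r := by
        rw [List.getLast_append_of_ne_nil _ hr]; exact List.getLast_mem hr
      exact hdisj h1' h2'
  rcases List.prefix_or_prefix_of_prefix h1 h2 with h | h
  · exact key _ _ h h2 ne1 ne2 he
  · exact (key _ _ h h1 ne2 ne1 he.symm).symm

lemma nodup_suffix_eq_of_head {α : Type*} {l p1 p2 : List α} (hl : l.Nodup)
    (h1 : p1 <:+ l) (h2 : p2 <:+ l) (ne1 : p1 ≠ []) (ne2 : p2 ≠ [])
    (he : p1.head ne1 = p2.head ne2) : p1 = p2 := by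
  have key : ∀ (q1 q2 : List α), (hq : q1 <:+ q2) → q2 <:+ l →
      (n1 : q1 ≠ []) → (n2 : q2 ≠ []) → q1.head n1 = q2.head n2 → q1 = q2 := by
    rintro q1 q2 ⟨r, rfl⟩ hq2 n1 n2 hhead
    rcases eq_or_ne r [] with rfl | hr
    · simp
    · exfalso
      have hnd : (r ++ q1).Nodup := hq2.sublist.nodup hl
      have hdisj := List.disjoint_of_nodup_append hnd
      have h1' : (r ++ q1).head n2 ∈ q1 := hhead ▸ List.head_mem n1
      have h2' : (r ++ q1).head n2 ∈ r := by
        rw [List.head_append_of_ne_nil hr]; exact List.head_mem hr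
      exact hdisj h2' h1'
  rcases List.suffix_or_suffix_of_suffix h1 h2 with h | h
  · exact key _ _ h h2 ne1 ne2 he
  · exact (key _ _ h h1 ne2 ne1 he.symm).symm

lemma inj_of_nodup_map {α β : Type*} {f : α → β} {l : List α} (h : (l.map f).Nodup) :
    ∀ a ∈ l, ∀ b ∈ l, f a = f b → a = b := by
  induction l with
  | nil => simp
  | cons c l ih =>
    simp only [List.map_cons, List.nodup_cons] at h
    intro a ha b hb hfab
    rcases List.mem_cons.mp ha with rfl | ha' <;> rcases List.mem_cons.mp hb with rfl | hb'
    · rfl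
    · exact absurd (hfab ▸ List.mem_map_of_mem (f := f) hb') h.1
    · exact absurd (hfab.symm ▸ List.mem_map_of_mem (f := f) ha') h.1
    · exact ih h.2 a ha' b hb' hfab

section Idx
variable {α : Type*} [DecidableEq α] {l A B m xs ys : List α} {e : α}

lemma idx_lt_of_mem_left (hAB : l = A ++ B) (he : e ∈ A) :
    l.idxOf e < A.length := by
  subst hAB
  rw [List.idxOf_append_of_mem he]
  exact List.idxOf_lt_length_iff.2 he

lemma idx_ge_of_mem_right (hl : l.Nodup) (hAB : l = A ++ B) (he : e ∈ B) :
    A.length ≤ l.idxOf e := by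
  subst hAB
  have heA : e ∉ A := fun h => List.disjoint_of_nodup_append hl h he
  rw [List.idxOf_append_of_notMem heA]
  omega

lemma chunk_head_not_right (hl : l.Nodup) (hAB : l = A ++ B)
    (hchunk : l = xs ++ m ++ ys) (hm : m ≠ [])
    {f : α} (hfm : f ∈ m) (hfA : f ∈ A) : m.head hm ∉ B := by
  intro hhB
  have hchunk' : l = xs ++ (m ++ ys) := by rw [hchunk, List.append_assoc]
  have h1 : A.length ≤ l.idxOf (m.head hm) :=
    idx_ge_of_mem_right hl hAB hhB
  have h2 : l.idxOf (m.head hm) < xs.length + 1 := by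
    have : m.head hm ∈ xs ++ [m.head hm] := by simp
    have hmm : m ++ ys = m.head hm :: (m.tail ++ ys) := by
      rw [← List.cons_append, List.cons_head_tail]
    have hpre : l = (xs ++ [m.head hm]) ++ (m.tail ++ ys) := by
      rw [hchunk', hmm]; simp
    simpa using idx_lt_of_mem_left hpre this
  have h3 : xs.length ≤ l.idxOf f :=
    idx_ge_of_mem_right hl hchunk' (List.mem_append_left _ hfm)
  have h4 : l.idxOf f < A.length := idx_lt_of_mem_left hAB hfA
  omega

lemma after_chunk_not_left (hl : l.Nodup) (hAB : l = A ++ B)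
    (hchunk : l = xs ++ m ++ ys)
    {f : α} (hfm : f ∈ m) (hfB : f ∈ B) : ∀ e ∈ ys, e ∉ A := by
  intro e hey heA
  have h1 : (xs ++ m).length ≤ l.idxOf e := idx_ge_of_mem_right hl hchunk hey
  have h2 : l.idxOf e < A.length := idx_lt_of_mem_left hAB heA
  have h3 : A.length ≤ l.idxOf f := idx_ge_of_mem_right hl hAB hfB
  have h4 : l.idxOf f < (xs ++ m).length :=
    idx_lt_of_mem_left hchunk (List.mem_append_right _ hfm)
  omega

lemma chunk_through_middle {C : List α} (hl : l.Nodup) (hABC : l = A ++ B ++ C)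
    (hchunk : l = xs ++ m ++ ys)
    {e z f : α} (hem : e ∈ m) (heA : e ∈ A) (hzm : z ∈ m) (hzC : z ∈ C)
    (hfB : f ∈ B) : f ∈ m := by
  have hchunk' : l = xs ++ (m ++ ys) := by rw [hchunk, List.append_assoc]
  have hABC' : l = A ++ (B ++ C) := by rw [hABC, List.append_assoc]
  have h1 : xs.length ≤ l.idxOf e :=
    idx_ge_of_mem_right hl hchunk' (List.mem_append_left _ hem)
  have h2 : l.idxOf e < A.length := idx_lt_of_mem_left hABC' heA
  have h3 : A.length ≤ l.idxOf f :=
    idx_ge_of_mem_right hl hABC' (List.mem_append_left _ hfB)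
  have h4 : l.idxOf f < (A ++ B).length :=
    idx_lt_of_mem_left hABC (List.mem_append_right _ hfB)
  have h5 : (A ++ B).length ≤ l.idxOf z := idx_ge_of_mem_right hl hABC hzC
  have h6 : l.idxOf z < (xs ++ m).length :=
    idx_lt_of_mem_left hchunk (List.mem_append_right _ hzm)
  have hfl : f ∈ l := by rw [hABC]; simp [hfB]
  have hfxs : f ∉ xs := fun h => by
    have := idx_lt_of_mem_left hchunk' h; simp at this h1 h4 h5 h6 ⊢; omega
  have hfys : f ∉ ys := fun h => by
    have := idx_ge_of_mem_right hl hchunk h; simp at this h1 h4 h5 h6 ⊢; omega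
  rcases (by rw [hchunk] at hfl; simpa using hfl : f ∈ xs ∨ f ∈ m ∨ f ∈ ys) with h | h | h
  · exact absurd h hfxs
  · exact h
  · exact absurd h hfys

end Idx

theorem _root_.SimpleGraph.Walk.head_darts_fst {G : SimpleGraph V} {u v : V} (p : G.Walk u v)
    (hp : p.darts ≠ []) : (p.darts.head hp).fst = u := by
  rw [SimpleGraph.Walk.head_darts_eq_firstDart]; rfl

theorem _root_.SimpleGraph.Walk.getLast_darts_snd {G : SimpleGraph V} {u v : V} (p : G.Walk u v)
    (hp : p.darts ≠ []) : (p.darts.getLast hp).snd = v := by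
  rw [SimpleGraph.Walk.getLast_darts_eq_lastDart]; rfl

open SimpleGraph in
lemma support_prefix_of_darts_prefix {G : SimpleGraph V} {u v y : V} {p : G.Walk u v}
    {W : G.Walk u y} (h : W.darts <+: p.darts) : W.support <+: p.support := by
  rw [← Walk.cons_map_snd_darts, ← Walk.cons_map_snd_darts]
  exact List.cons_prefix_cons.mpr ⟨rfl, h.map _⟩

open SimpleGraph in
lemma support_suffix_of_darts_suffix {G : SimpleGraph V} {u v y : V} {p : G.Walk u v}
    {W : G.Walk y v} (h : W.darts <:+ p.darts) : W.support <:+ p.support := by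
  rw [← Walk.map_fst_darts_append, ← Walk.map_fst_darts_append]
  obtain ⟨r, hr⟩ := h
  exact ⟨r.map (·.fst), by rw [← List.append_assoc, ← List.map_append, hr]⟩

open SimpleGraph in
lemma darts_prefix_unique {G : SimpleGraph V} {u v y : V} {p : G.Walk u v}
    (hp : p.support.Nodup) {W W' : G.Walk u y}
    (h : W.darts <+: p.darts) (h' : W'.darts <+: p.darts) : W.darts = W'.darts := by
  have h1 := support_prefix_of_darts_prefix h
  have h2 := support_prefix_of_darts_prefix h'
  have hs : W.support = W'.support :=
    nodup_prefix_eq_of_getLast hp h1 h2 (Walk.support_ne_nil _) (Walk.support_ne_nil _)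
      (by rw [Walk.getLast_support, Walk.getLast_support])
  have hlen : W.darts.length = W'.darts.length := by
    have h3 := congrArg List.length hs
    rw [Walk.length_support, Walk.length_support] at h3
    rw [Walk.length_darts, Walk.length_darts]; omega
  exact List.IsPrefix.eq_of_length
    (List.prefix_of_prefix_length_le h h' (le_of_eq hlen)) hlen

open SimpleGraph in
lemma chunk_prefix_eq {G : SimpleGraph V} {u v y z : V} {p : G.Walk u v}
    (hp : p.support.Nodup) {t : G.Walk y z} (ht : t.darts ≠ []) {xs ys : List G.Dart}
    (hsplit : p.darts = xs ++ t.darts ++ ys) {W : G.Walk u y}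
    (hW : W.darts <+: p.darts) : W.darts = xs := by
  obtain ⟨d', ds', htd⟩ := List.exists_cons_of_ne_nil ht
  have hd'fst : d'.fst = y := by
    have h0 : t.darts.head ht = d' := by
      rw [← Option.some_inj, ← List.head?_eq_head, htd]; rfl
    rw [← h0]; exact Walk.head_darts_fst t ht
  have hxs_pref : xs <+: p.darts := ⟨t.darts ++ ys, by rw [hsplit, List.append_assoc]⟩
  have hxs_pre : (u :: xs.map (·.snd)) <+: p.support := by
    rw [← Walk.cons_map_snd_darts]
    exact List.cons_prefix_cons.mpr ⟨rfl, hxs_pref.map _⟩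
  have hlast_xs : (u :: xs.map (·.snd)).getLast (by simp) = y := by
    cases hxs : xs with
    | nil =>
      simp only [List.map_nil, List.getLast_singleton]
      rw [hxs] at hsplit
      simp only [List.nil_append] at hsplit
      have hpd : p.darts ≠ [] := by rw [hsplit, htd]; simp
      have h1 : p.darts.head hpd = d' := by
        rw [← Option.some_inj, ← List.head?_eq_head, hsplit, htd]; rfl
      have h2 := Walk.head_darts_fst p hpd
      rw [h1] at h2
      rw [← h2, hd'fst]
    | cons d ds =>
      rw [hxs] at hsplit
      have hch := p.isChain_dartAdj_darts
      rw [hsplit, List.append_assoc, htd] at hch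
      have hrel := (List.isChain_append.mp hch).2.2
      have hadj : G.DartAdj ((d :: ds).getLast (by simp)) d' := by
        apply hrel
        · rw [List.getLast?_eq_getLast (by simp)]; rfl
        · rfl
      have hsnd : ((d :: ds).getLast (by simp)).snd = d'.fst := hadj
      have h5 : ((d :: ds).getLast (by simp)).snd = y := by rw [hsnd, hd'fst]
      rw [List.getLast_cons (by simp), List.getLast_map]
      exact h5
  have hW_pre : W.support <+: p.support := support_prefix_of_darts_prefix hW
  have hsupp_eq : W.support = u :: xs.map (·.snd) := by
    apply nodup_prefix_eq_of_getLast hp hW_pre hxs_pre (Walk.support_ne_nil _) (by simp)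
    rw [Walk.getLast_support, hlast_xs]
  have hlen : W.darts.length = xs.length := by
    have h1 := congrArg List.length hsupp_eq
    simp only [List.length_cons, List.length_map] at h1
    have h2 : W.support.length = W.darts.length + 1 := by
      rw [Walk.length_support, Walk.length_darts]
    omega
  exact List.IsPrefix.eq_of_length
    (List.prefix_of_prefix_length_le hW hxs_pref (le_of_eq hlen)) hlen

open SimpleGraph in
lemma chunk_suffix_eq {G : SimpleGraph V} {u v y z : V} {p : G.Walk u v}
    (hp : p.support.Nodup) {t : G.Walk y z} (ht : t.darts ≠ []) {xs ys : List G.Dart}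
    (hsplit : p.darts = xs ++ t.darts ++ ys) {W : G.Walk z v}
    (hW : W.darts <:+ p.darts) : W.darts = ys := by
  have htlast : (t.darts.getLast ht).snd = z := Walk.getLast_darts_snd t ht
  have hys_suf : ys <:+ p.darts := ⟨xs ++ t.darts, by rw [hsplit]⟩
  have hys_sup : (ys.map (·.fst) ++ [v]) <:+ p.support := by
    rw [← Walk.map_fst_darts_append]
    obtain ⟨r, hr⟩ := hys_suf
    exact ⟨r.map (·.fst), by rw [← List.append_assoc, ← List.map_append, hr]⟩
  have hhead_ys : (ys.map (·.fst) ++ [v]).head (by simp) = z := by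
    cases hys : ys with
    | nil =>
      simp only [List.map_nil, List.nil_append, List.head_cons]
      rw [hys] at hsplit
      simp only [List.append_nil] at hsplit
      have hpd : p.darts ≠ [] := by
        rw [hsplit]; exact fun h => ht (List.append_eq_nil_iff.mp h).2
      have h1 : p.darts.getLast hpd = t.darts.getLast ht := by
        rw [← Option.some_inj, ← List.getLast?_eq_getLast, hsplit,
          List.getLast?_append, List.getLast?_eq_getLast ht]; rfl
      have h2 := Walk.getLast_darts_snd p hpd
      rw [h1, htlast] at h2
      exact h2.symm
    | cons d ds =>
      rw [hys] at hsplit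
      have hch := p.isChain_dartAdj_darts
      rw [hsplit] at hch
      have hrel := (List.isChain_append.mp hch).2.2
      have hne2 : xs ++ t.darts ≠ [] := by simp [ht]
      have hadj : G.DartAdj ((xs ++ t.darts).getLast hne2) d := by
        apply hrel
        · rw [List.getLast?_eq_getLast hne2]; rfl
        · rfl
      have hgl : (xs ++ t.darts).getLast hne2 = t.darts.getLast ht :=
        List.getLast_append_of_ne_nil _ ht
      have hsnd : ((xs ++ t.darts).getLast hne2).snd = d.fst := hadj
      rw [hgl, htlast] at hsnd
      simp only [List.map_cons, List.cons_append, List.head_cons]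
      exact hsnd.symm
  have hW_suf : W.support <:+ p.support := support_suffix_of_darts_suffix hW
  have hsupp_eq : W.support = ys.map (·.fst) ++ [v] := by
    apply nodup_suffix_eq_of_head hp hW_suf hys_sup (Walk.support_ne_nil _) (by simp)
    rw [Walk.head_support, hhead_ys]
  have hlen : W.darts.length = ys.length := by
    have h1 : W.support.length = ys.length + 1 := by rw [hsupp_eq]; simp
    have h2 : W.support.length = W.darts.length + 1 := by
      rw [Walk.length_support, Walk.length_darts]
    omega
  exact List.IsSuffix.eq_of_length
    (List.suffix_of_suffix_length_le hW hys_suf (le_of_eq hlen)) hlen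

open SimpleGraph in
lemma reach_del {K : SimpleGraph V} {α β : V}
    (hr : (K \ SimpleGraph.fromEdgeSet {s(α, β)}).Reachable α β) :
    ∀ {a b : V}, K.Walk a b → (K \ SimpleGraph.fromEdgeSet {s(α, β)}).Reachable a b := by
  intro a b p
  induction p with
  | nil => exact Reachable.refl _
  | @cons a c b h q ih =>
    refine Reachable.trans ?_ ih
    by_cases hsab : s(a, c) = s(α, β)
    · rcases Sym2.eq_iff.mp hsab with ⟨rfl, rfl⟩ | ⟨rfl, rfl⟩
      · exact hr
      · exact hr.symm
    · refine Adj.reachable ?_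
      rw [SimpleGraph.sdiff_adj]
      exact ⟨h, by simp [SimpleGraph.fromEdgeSet_adj, hsab]⟩

open SimpleGraph in
lemma exists_steinerForest_subset (G : SimpleGraph V) (s₁ t₁ s₂ t₂ : V)
    (H : Finset (Sym2 V)) (hH : ↑H ⊆ G.edgeSet)
    (h1 : (SimpleGraph.fromEdgeSet (↑H : Set (Sym2 V))).Reachable s₁ t₁)
    (h2 : (SimpleGraph.fromEdgeSet (↑H : Set (Sym2 V))).Reachable s₂ t₂) :
    ∃ F'', F'' ⊆ H ∧ IsSteinerForest G s₁ t₁ s₂ t₂ F'' := by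
  classical
  induction H using Finset.strongInduction with
  | _ H ih =>
  by_cases hac : (SimpleGraph.fromEdgeSet (↑H : Set (Sym2 V))).IsAcyclic
  · refine ⟨H, le_refl _, hH, hac, ?_, ?_⟩
    · obtain ⟨p⟩ := h1
      have hle : SimpleGraph.fromEdgeSet (↑H : Set (Sym2 V)) ≤ G :=
        (SimpleGraph.fromEdgeSet_mono hH).trans_eq (SimpleGraph.fromEdgeSet_edgeSet G)
      refine ⟨(p.mapLe hle).toPath, (p.mapLe hle).toPath.2, fun e he => ?_⟩
      have he' : e ∈ (p.mapLe hle).edges := Walk.edges_toPath_subset _ he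
      have he'' : e ∈ p.edges := by
        rwa [Walk.edges_mapLe_eq_edges] at he'
      have h5 := p.edges_subset_edgeSet he''
      rw [SimpleGraph.edgeSet_fromEdgeSet] at h5
      simpa using h5.1
    · obtain ⟨p⟩ := h2
      have hle : SimpleGraph.fromEdgeSet (↑H : Set (Sym2 V)) ≤ G :=
        (SimpleGraph.fromEdgeSet_mono hH).trans_eq (SimpleGraph.fromEdgeSet_edgeSet G)
      refine ⟨(p.mapLe hle).toPath, (p.mapLe hle).toPath.2, fun e he => ?_⟩
      have he' : e ∈ (p.mapLe hle).edges := Walk.edges_toPath_subset _ he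
      have he'' : e ∈ p.edges := by
        rwa [Walk.edges_mapLe_eq_edges] at he'
      have h5 := p.edges_subset_edgeSet he''
      rw [SimpleGraph.edgeSet_fromEdgeSet] at h5
      simpa using h5.1
  · simp only [SimpleGraph.IsAcyclic] at hac
    push_neg at hac
    obtain ⟨v0, c, hc⟩ := hac
    have hcne : c.edges ≠ [] := by
      have h3 := hc.three_le_length
      intro h
      have h0 : c.length = 0 := by rw [← c.length_edges, h]; rfl
      omega
    set e := c.edges.head hcne with hedef
    have heH : e ∈ H := by
      have h5 := c.edges_subset_edgeSet (List.head_mem hcne)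
      rw [SimpleGraph.edgeSet_fromEdgeSet] at h5
      exact Finset.mem_coe.mp h5.1
    obtain ⟨α, β, hrep⟩ : ∃ α β, e = s(α, β) :=
      Sym2.ind (f := fun z => ∃ α β, z = s(α, β)) (fun a b => ⟨a, b, rfl⟩) e
    have hcyc : ∃ (u' : V) (p : (SimpleGraph.fromEdgeSet (↑H : Set (Sym2 V))).Walk u' u'),
        p.IsCycle ∧ s(α, β) ∈ p.edges :=
      ⟨v0, c, hc, hrep ▸ List.head_mem hcne⟩
    obtain ⟨hadj, hreach⟩ := SimpleGraph.adj_and_reachable_delete_edges_iff_exists_cycle.mpr hcyc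
    have hKeq : SimpleGraph.fromEdgeSet (↑H : Set (Sym2 V)) \ SimpleGraph.fromEdgeSet {s(α, β)}
        = SimpleGraph.fromEdgeSet (↑(H.erase e) : Set (Sym2 V)) := by
      rw [Finset.coe_erase, ← hrep]
      rw [show ((↑H \ {e} : Set (Sym2 V))) = (↑H : Set (Sym2 V)) \ {e} from rfl]
      rw [SimpleGraph.fromEdgeSet_sdiff]
    have h1' : (SimpleGraph.fromEdgeSet (↑(H.erase e) : Set (Sym2 V))).Reachable s₁ t₁ := by
      rw [← hKeq]; exact reach_del hreach h1.some
    have h2' : (SimpleGraph.fromEdgeSet (↑(H.erase e) : Set (Sym2 V))).Reachable s₂ t₂ := by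
      rw [← hKeq]; exact reach_del hreach h2.some
    obtain ⟨F'', hsub, hforest⟩ := ih (H.erase e) (Finset.erase_ssubset heH)
      ((Finset.coe_subset.mpr (Finset.erase_subset _ _)).trans hH) h1' h2'
    exact ⟨F'', hsub.trans (Finset.erase_subset _ _), hforest⟩

end Helpers


/-- properties of NBC1.  In an NBC1 configuration whose
underlying paths form an optimal Steiner forest and whose three paths
`q₁, q₂, q₃` are tight alternatives with respect to a feasible LP(F)
cost-share assignment in which all commonly used edges are completely paid:
(i) every edge substituted by `q₁` or by `q₃` is completely paid;
(ii) the player with terminal pair `(u,v)` fully pays every commonly used edge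
that is substituted by `q₁` but not by `q₃`. -/
theorem nbc1_properties
    [Fintype V] (G : SimpleGraph V) (u v w x : V) (c : Sym2 V → ℝ)
    (hc : ∀ e, 0 ≤ c e)
    (B : PBC G u v w x)
    (hOpt : IsOptimalSteinerForest G u v w x c
      (B.Pu.edges.toFinset ∪ B.Pl.edges.toFinset))
    (ξu ξl : Sym2 V → ℝ)
    (hFeas : Feasible2 G c B.Pu B.Pl ξu ξl)
    (hPaidM : ∀ e ∈ B.M.edges, ξu e + ξl e = c e)
    (ht1 : walkCost c B.q1 = ∑ e ∈ B.S1.edges.toFinset, ξu e)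
    (ht2 : walkCost c B.q2 = ∑ e ∈ B.S2.edges.toFinset, ξl e)
    (ht3 : walkCost c B.q3 = ∑ e ∈ B.S3.edges.toFinset, ξl e)
    (hNBC1 : B.NBC1) :
    (∀ e, e ∈ B.S1.edges ∨ e ∈ B.S3.edges → ξu e + ξl e = c e) ∧
    (∀ e ∈ B.M.edges, e ∈ B.S1.edges → e ∉ B.S3.edges → ξu e = c e) := by
  classical
  obtain ⟨hSmall, s, hsq1, hsq3⟩ := hNBC1
  have hPuP : B.Pu.IsPath := B.hPu
  have hPlP : B.Pl.IsPath := B.hPl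
  have hndPuE : B.Pu.edges.Nodup := hPuP.isTrail.edges_nodup
  have hndPlE : B.Pl.edges.Nodup := hPlP.isTrail.edges_nodup
  have hndPuS : B.Pu.support.Nodup := hPuP.support_nodup
  have hndPlS : B.Pl.support.Nodup := hPlP.support_nodup
  have hMP : B.M.IsPath := by
    have h1 : (B.Lu.append B.M).IsPath := hPuP.of_append_left
    exact h1.of_append_right
  have hPuE : B.Pu.edges = B.Lu.edges ++ B.M.edges ++ B.Ru.edges := by
    show ((B.Lu.append B.M).append B.Ru).edges = _
    rw [SimpleGraph.Walk.edges_append, SimpleGraph.Walk.edges_append]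
  have hPlE : B.Pl.edges = B.Ll.edges ++ B.M.edges ++ B.Rl.edges := by
    show ((B.Ll.append B.M).append B.Rl).edges = _
    rw [SimpleGraph.Walk.edges_append, SimpleGraph.Walk.edges_append]
  have hPuD : B.Pu.darts = B.Lu.darts ++ B.M.darts ++ B.Ru.darts := by
    show ((B.Lu.append B.M).append B.Ru).darts = _
    rw [SimpleGraph.Walk.darts_append, SimpleGraph.Walk.darts_append]
  have hPlD : B.Pl.darts = B.Ll.darts ++ B.M.darts ++ B.Rl.darts := by
    show ((B.Ll.append B.M).append B.Rl).darts = _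
    rw [SimpleGraph.Walk.darts_append, SimpleGraph.Walk.darts_append]
  -- infix decompositions
  obtain ⟨xs1, ys1, hsplit1'⟩ := B.hS1
  have hsplit1 : B.Pu.darts = xs1 ++ B.S1.darts ++ ys1 := hsplit1'.symm
  obtain ⟨xs3, ys3, hsplit3'⟩ := B.hS3
  have hsplit3 : B.Pl.darts = xs3 ++ B.S3.darts ++ ys3 := hsplit3'.symm
  have hchunkE1 : B.Pu.edges = xs1.map SimpleGraph.Dart.edge ++ B.S1.edges
      ++ ys1.map SimpleGraph.Dart.edge := by
    show B.Pu.darts.map SimpleGraph.Dart.edge = _ ++ B.S1.darts.map SimpleGraph.Dart.edge ++ _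
    rw [hsplit1]; simp [List.map_append]
  have hchunkE3 : B.Pl.edges = xs3.map SimpleGraph.Dart.edge ++ B.S3.edges
      ++ ys3.map SimpleGraph.Dart.edge := by
    show B.Pl.darts.map SimpleGraph.Dart.edge = _ ++ B.S3.darts.map SimpleGraph.Dart.edge ++ _
    rw [hsplit3]; simp [List.map_append]
  have hS1ne : B.S1.edges ≠ [] := by
    obtain ⟨f, hf, -⟩ := B.hC1M
    exact fun h => by simp [h] at hf
  have hS3ne : B.S3.edges ≠ [] := by
    obtain ⟨f, hf, -⟩ := B.hC3M
    exact fun h => by simp [h] at hf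
  have hS1dne : B.S1.darts ≠ [] := by
    intro h
    exact hS1ne (by show B.S1.darts.map SimpleGraph.Dart.edge = []; rw [h]; rfl)
  have hS3dne : B.S3.darts ≠ [] := by
    intro h
    exact hS3ne (by show B.S3.darts.map SimpleGraph.Dart.edge = []; rw [h]; rfl)
  have hS1Pu : ∀ e ∈ B.S1.edges, e ∈ B.Pu.edges := fun e he => by
    rw [hchunkE1]; simp [he]
  have hS3Pl : ∀ e ∈ B.S3.edges, e ∈ B.Pl.edges := fun e he => by
    rw [hchunkE3]; simp [he]
  have hMPu : ∀ e ∈ B.M.edges, e ∈ B.Pu.edges := fun e he => by rw [hPuE]; simp [he]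
  have hLuPu : ∀ e ∈ B.Lu.edges, e ∈ B.Pu.edges := fun e he => by rw [hPuE]; simp [he]
  have hLlPl : ∀ e ∈ B.Ll.edges, e ∈ B.Pl.edges := fun e he => by rw [hPlE]; simp [he]
  -- S3 contains no edge of Ll
  have hS3Ll : ∀ e ∈ B.S3.edges, e ∉ B.Ll.edges := by
    intro e he hell
    obtain ⟨z, hz3, hzRl⟩ := B.hC3Rl
    obtain ⟨f, hfM, hfn3⟩ := B.hMC3
    exact hfn3 (chunk_through_middle hndPlE hPlE hchunkE3 he hell hz3 hzRl hfM)
  -- a1 and a3 lie on M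
  have hhead1M : B.S1.edges.head hS1ne ∈ B.M.edges := by
    have hmem : B.S1.edges.head hS1ne ∈ B.S1.edges := List.head_mem _
    have hmemPu := hS1Pu _ hmem
    rw [hPuE] at hmemPu
    rcases List.mem_append.mp hmemPu with h | h
    · rcases List.mem_append.mp h with h' | h'
      · exact absurd h' (hSmall _ hmem)
      · exact h'
    · exfalso
      obtain ⟨f, hf1, hfM⟩ := B.hC1M
      exact chunk_head_not_right hndPuE hPuE hchunkE1 hS1ne hf1
        (List.mem_append_right _ hfM) h
  have hhead3M : B.S3.edges.head hS3ne ∈ B.M.edges := by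
    have hmem : B.S3.edges.head hS3ne ∈ B.S3.edges := List.head_mem _
    have hmemPl := hS3Pl _ hmem
    rw [hPlE] at hmemPl
    rcases List.mem_append.mp hmemPl with h | h
    · rcases List.mem_append.mp h with h' | h'
      · exact absurd h' (hS3Ll _ hmem)
      · exact h'
    · exfalso
      obtain ⟨f, hf3, hfM⟩ := B.hC3M
      exact chunk_head_not_right hndPlE hPlE hchunkE3 hS3ne hf3
        (List.mem_append_right _ hfM) h
  have hS1dPu : ∀ d ∈ B.S1.darts, d ∈ B.Pu.darts := fun d hd => by
    rw [hsplit1]; simp [hd]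
  have hS3dPl : ∀ d ∈ B.S3.darts, d ∈ B.Pl.darts := fun d hd => by
    rw [hsplit3]; simp [hd]
  have ha1M : B.a1 ∈ B.M.support := by
    have hd1e : (B.S1.darts.head hS1dne).edge = B.S1.edges.head hS1ne := by
      show _ = (B.S1.darts.map SimpleGraph.Dart.edge).head _
      exact (List.head_map _).symm
    obtain ⟨d', hd'M, hd'e⟩ := List.mem_map.mp
      (show B.S1.edges.head hS1ne ∈ B.M.darts.map SimpleGraph.Dart.edge from hhead1M)
    have hd1Pu : B.S1.darts.head hS1dne ∈ B.Pu.darts := hS1dPu _ (List.head_mem _)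
    have hd'Pu : d' ∈ B.Pu.darts := by rw [hPuD]; simp [hd'M]
    have heqd : B.S1.darts.head hS1dne = d' :=
      inj_of_nodup_map (show (B.Pu.darts.map SimpleGraph.Dart.edge).Nodup from hndPuE)
        _ hd1Pu d' hd'Pu (by rw [hd1e, hd'e])
    have ha1 : B.a1 = (B.S1.darts.head hS1dne).fst :=
      (SimpleGraph.Walk.head_darts_fst B.S1 hS1dne).symm
    rw [ha1, heqd]
    exact SimpleGraph.Walk.dart_fst_mem_support_of_mem_darts _ hd'M
  have ha3M : B.a3 ∈ B.M.support := by
    have hd3e : (B.S3.darts.head hS3dne).edge = B.S3.edges.head hS3ne := by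
      show _ = (B.S3.darts.map SimpleGraph.Dart.edge).head _
      exact (List.head_map _).symm
    obtain ⟨d', hd'M, hd'e⟩ := List.mem_map.mp
      (show B.S3.edges.head hS3ne ∈ B.M.darts.map SimpleGraph.Dart.edge from hhead3M)
    have hd3Pl : B.S3.darts.head hS3dne ∈ B.Pl.darts := hS3dPl _ (List.head_mem _)
    have hd'Pl : d' ∈ B.Pl.darts := by rw [hPlD]; simp [hd'M]
    have heqd : B.S3.darts.head hS3dne = d' :=
      inj_of_nodup_map (show (B.Pl.darts.map SimpleGraph.Dart.edge).Nodup from hndPlE)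
        _ hd3Pl d' hd'Pl (by rw [hd3e, hd'e])
    have ha3 : B.a3 = (B.S3.darts.head hS3dne).fst :=
      (SimpleGraph.Walk.head_darts_fst B.S3 hS3dne).symm
    rw [ha3, heqd]
    exact SimpleGraph.Walk.dart_fst_mem_support_of_mem_darts _ hd'M
  have hb1Pu : B.b1 ∈ B.Pu.support := by
    have hlast := SimpleGraph.Walk.getLast_darts_snd B.S1 hS1dne
    have hmem : B.S1.darts.getLast hS1dne ∈ B.Pu.darts :=
      hS1dPu _ (List.getLast_mem hS1dne)
    rw [← hlast]
    exact SimpleGraph.Walk.dart_snd_mem_support_of_mem_darts _ hmem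
  have hb3Pl : B.b3 ∈ B.Pl.support := by
    have hlast := SimpleGraph.Walk.getLast_darts_snd B.S3 hS3dne
    have hmem : B.S3.darts.getLast hS3dne ∈ B.Pl.darts :=
      hS3dPl _ (List.getLast_mem hS3dne)
    rw [← hlast]
    exact SimpleGraph.Walk.dart_snd_mem_support_of_mem_darts _ hmem
  -- identification of the pieces before and after the substituted segments
  have htU1pre : (B.M.takeUntil B.a1 ha1M).darts <+: B.M.darts :=
    ⟨(B.M.dropUntil B.a1 ha1M).darts, by
      rw [← SimpleGraph.Walk.darts_append, SimpleGraph.Walk.take_spec]⟩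
  have htU3pre : (B.M.takeUntil B.a3 ha3M).darts <+: B.M.darts :=
    ⟨(B.M.dropUntil B.a3 ha3M).darts, by
      rw [← SimpleGraph.Walk.darts_append, SimpleGraph.Walk.take_spec]⟩
  have hAu1pre : (B.Lu.append (B.M.takeUntil B.a1 ha1M)).darts <+: B.Pu.darts := by
    obtain ⟨r, hr⟩ := htU1pre
    refine ⟨r ++ B.Ru.darts, ?_⟩
    rw [SimpleGraph.Walk.darts_append, hPuD, ← hr]
    simp [List.append_assoc]
  have hAl3pre : (B.Ll.append (B.M.takeUntil B.a3 ha3M)).darts <+: B.Pl.darts := by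
    obtain ⟨r, hr⟩ := htU3pre
    refine ⟨r ++ B.Rl.darts, ?_⟩
    rw [SimpleGraph.Walk.darts_append, hPlD, ← hr]
    simp [List.append_assoc]
  have hxs1 : (B.Lu.append (B.M.takeUntil B.a1 ha1M)).darts = xs1 :=
    chunk_prefix_eq hndPuS hS1dne hsplit1 hAu1pre
  have hxs3 : (B.Ll.append (B.M.takeUntil B.a3 ha3M)).darts = xs3 :=
    chunk_prefix_eq hndPlS hS3dne hsplit3 hAl3pre
  have hys1 : (B.Pu.dropUntil B.b1 hb1Pu).darts = ys1 :=
    chunk_suffix_eq hndPuS hS1dne hsplit1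
      ⟨(B.Pu.takeUntil B.b1 hb1Pu).darts, by
        rw [← SimpleGraph.Walk.darts_append, SimpleGraph.Walk.take_spec]⟩
  have hys3 : (B.Pl.dropUntil B.b3 hb3Pl).darts = ys3 :=
    chunk_suffix_eq hndPlS hS3dne hsplit3
      ⟨(B.Pl.takeUntil B.b3 hb3Pl).darts, by
        rw [← SimpleGraph.Walk.darts_append, SimpleGraph.Walk.take_spec]⟩
  have hxs1E : (B.Lu.append (B.M.takeUntil B.a1 ha1M)).edges = xs1.map SimpleGraph.Dart.edge := by
    show (B.Lu.append (B.M.takeUntil B.a1 ha1M)).darts.map SimpleGraph.Dart.edge = _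
    rw [hxs1]
  have hxs3E : (B.Ll.append (B.M.takeUntil B.a3 ha3M)).edges = xs3.map SimpleGraph.Dart.edge := by
    show (B.Ll.append (B.M.takeUntil B.a3 ha3M)).darts.map SimpleGraph.Dart.edge = _
    rw [hxs3]
  have hys1E : (B.Pu.dropUntil B.b1 hb1Pu).edges = ys1.map SimpleGraph.Dart.edge := by
    show (B.Pu.dropUntil B.b1 hb1Pu).darts.map SimpleGraph.Dart.edge = _
    rw [hys1]
  have hys3E : (B.Pl.dropUntil B.b3 hb3Pl).edges = ys3.map SimpleGraph.Dart.edge := by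
    show (B.Pl.dropUntil B.b3 hb3Pl).darts.map SimpleGraph.Dart.edge = _
    rw [hys3]
  -- disjointness facts
  have hnd1 : (xs1.map SimpleGraph.Dart.edge ++ B.S1.edges
      ++ ys1.map SimpleGraph.Dart.edge).Nodup := hchunkE1 ▸ hndPuE
  have hnd3 : (xs3.map SimpleGraph.Dart.edge ++ B.S3.edges
      ++ ys3.map SimpleGraph.Dart.edge).Nodup := hchunkE3 ▸ hndPlE
  have D5 : ∀ e ∈ (B.M.takeUntil B.a1 ha1M).edges, e ∉ B.S1.edges := by
    intro e he
    have he' : e ∈ xs1.map SimpleGraph.Dart.edge := by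
      rw [← hxs1E, SimpleGraph.Walk.edges_append]
      simp [he]
    exact fun h1 =>
      List.disjoint_of_nodup_append (List.Nodup.of_append_left hnd1) he'
        (by simp [h1] : e ∈ B.S1.edges)
  have D6 : ∀ e ∈ (B.M.takeUntil B.a3 ha3M).edges, e ∉ B.S3.edges := by
    intro e he
    have he' : e ∈ xs3.map SimpleGraph.Dart.edge := by
      rw [← hxs3E, SimpleGraph.Walk.edges_append]
      simp [he]
    exact fun h3 =>
      List.disjoint_of_nodup_append (List.Nodup.of_append_left hnd3) he'
        (by simp [h3] : e ∈ B.S3.edges)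
  have D7 : ∀ e ∈ (B.Pu.dropUntil B.b1 hb1Pu).edges, e ∉ B.S1.edges := by
    intro e he h1
    rw [hys1E] at he
    exact List.disjoint_of_nodup_append hnd1
      (List.mem_append_right _ h1) he
  have D9 : ∀ e ∈ (B.Pl.dropUntil B.b3 hb3Pl).edges, e ∉ B.S3.edges := by
    intro e he h3
    rw [hys3E] at he
    exact List.disjoint_of_nodup_append hnd3
      (List.mem_append_right _ h3) he
  have hLuM : ∀ e ∈ B.Lu.edges, e ∉ B.M.edges := by
    intro e he hM
    have := List.disjoint_of_nodup_append (List.Nodup.of_append_left (hPuE ▸ hndPuE))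
    exact this he hM
  have hLlM : ∀ e ∈ B.Ll.edges, e ∉ B.M.edges := by
    intro e he hM
    have := List.disjoint_of_nodup_append (List.Nodup.of_append_left (hPlE ▸ hndPlE))
    exact this he hM
  have D2 : ∀ e ∈ B.Lu.edges, e ∉ B.S3.edges := by
    intro e he h3
    exact hLuM e he (B.hmeet e (hLuPu e he) (hS3Pl e h3))
  have D3 : ∀ e ∈ B.Ll.edges, e ∉ B.S1.edges := by
    intro e he h1
    exact hLlM e he (B.hmeet e (hS1Pu e h1) (hLlPl e he))
  have D8 : ∀ e ∈ (B.Pu.dropUntil B.b1 hb1Pu).edges, e ∉ B.S3.edges := by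
    intro e he h3
    have hePu : e ∈ B.Pu.edges := SimpleGraph.Walk.edges_dropUntil_subset _ _ he
    have heM : e ∈ B.M.edges := B.hmeet e hePu (hS3Pl e h3)
    obtain ⟨f, hf1, hfRu⟩ := B.hC1Ru
    have := after_chunk_not_left hndPuE hPuE hchunkE1 hf1 hfRu
    exact this e (by rwa [hys1E] at he) (List.mem_append_right _ heM)
  have D10 : ∀ e ∈ (B.Pl.dropUntil B.b3 hb3Pl).edges, e ∉ B.S1.edges := by
    intro e he h1
    have hePl : e ∈ B.Pl.edges := SimpleGraph.Walk.edges_dropUntil_subset _ _ he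
    have heM : e ∈ B.M.edges := B.hmeet e (hS1Pu e h1) hePl
    obtain ⟨f, hf3, hfRl⟩ := B.hC3Rl
    have := after_chunk_not_left hndPlE hPlE hchunkE3 hf3 hfRl
    exact this e (by rwa [hys3E] at he) (List.mem_append_right _ heM)
  -- the dichotomy for the relative position of a1 and a3 on M
  have hpre1 : (B.M.takeUntil B.a1 ha1M).support <+: B.M.support :=
    ⟨(B.M.dropUntil B.a1 ha1M).support.tail, by
      rw [← SimpleGraph.Walk.support_append, SimpleGraph.Walk.take_spec]⟩
  have hpre3 : (B.M.takeUntil B.a3 ha3M).support <+: B.M.support :=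
    ⟨(B.M.dropUntil B.a3 ha3M).support.tail, by
      rw [← SimpleGraph.Walk.support_append, SimpleGraph.Walk.take_spec]⟩
  have hcase : B.a1 ∈ (B.M.takeUntil B.a3 ha3M).support ∨
      B.a3 ∈ (B.M.takeUntil B.a1 ha1M).support := by
    rcases List.prefix_or_prefix_of_prefix hpre1 hpre3 with h | h
    · exact Or.inl (h.subset (SimpleGraph.Walk.end_mem_support _))
    · exact Or.inr (h.subset (SimpleGraph.Walk.end_mem_support _))
  -- finsets
  set S1f := B.S1.edges.toFinset with hS1f
  set S3f := B.S3.edges.toFinset with hS3f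
  set Ff := B.Pu.edges.toFinset ∪ B.Pl.edges.toFinset with hFfdef
  set Sf := S1f ∪ S3f with hSfdef
  set Qf := B.q1.edges.toFinset ∪ B.q3.edges.toFinset with hQfdef
  set F' := (Ff \ Sf) ∪ Qf with hF'def
  have memPu : ∀ {e}, e ∈ B.Pu.edges → e ∉ B.S1.edges → e ∉ B.S3.edges → e ∈ F' := by
    intro e h h1 h3
    refine Finset.mem_union_left _ (Finset.mem_sdiff.mpr
      ⟨Finset.mem_union_left _ (List.mem_toFinset.mpr h), ?_⟩)
    simp only [hSfdef, hS1f, hS3f, Finset.mem_union, List.mem_toFinset]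
    tauto
  have memPl : ∀ {e}, e ∈ B.Pl.edges → e ∉ B.S1.edges → e ∉ B.S3.edges → e ∈ F' := by
    intro e h h1 h3
    refine Finset.mem_union_left _ (Finset.mem_sdiff.mpr
      ⟨Finset.mem_union_right _ (List.mem_toFinset.mpr h), ?_⟩)
    simp only [hSfdef, hS1f, hS3f, Finset.mem_union, List.mem_toFinset]
    tauto
  have memQ1 : ∀ {e}, e ∈ B.q1.edges → e ∈ F' := fun {e} h =>
    Finset.mem_union_right _ (Finset.mem_union_left _ (List.mem_toFinset.mpr h))
  have memQ3 : ∀ {e}, e ∈ B.q3.edges → e ∈ F' := fun {e} h =>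
    Finset.mem_union_right _ (Finset.mem_union_right _ (List.mem_toFinset.mpr h))
  have hF'G : (↑F' : Set (Sym2 V)) ⊆ G.edgeSet := by
    intro e he
    rw [Finset.mem_coe] at he
    rcases Finset.mem_union.mp he with h | h
    · rcases Finset.mem_union.mp (Finset.mem_sdiff.mp h).1 with h' | h'
      · exact B.Pu.edges_subset_edgeSet (List.mem_toFinset.mp h')
      · exact B.Pl.edges_subset_edgeSet (List.mem_toFinset.mp h')
    · rcases Finset.mem_union.mp h with h' | h'
      · exact B.q1.edges_subset_edgeSet (List.mem_toFinset.mp h')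
      · exact B.q3.edges_subset_edgeSet (List.mem_toFinset.mp h')
  have reachseg : ∀ {a b : V} (W : G.Walk a b), (∀ e ∈ W.edges, e ∈ F') →
      (SimpleGraph.fromEdgeSet (↑F' : Set (Sym2 V))).Reachable a b := by
    intro a b W hW
    refine ⟨W.transfer _ fun e he => ?_⟩
    rw [SimpleGraph.edgeSet_fromEdgeSet]
    refine ⟨Finset.mem_coe.mpr (hW e he), ?_⟩
    exact G.not_isDiag_of_mem_edgeSet (W.edges_subset_edgeSet he)
  -- the two reroutes
  have hMtU1 : ∀ e ∈ (B.M.takeUntil B.a1 ha1M).edges, e ∈ B.M.edges :=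
    fun e he => SimpleGraph.Walk.edges_takeUntil_subset _ _ he
  have hMtU3 : ∀ e ∈ (B.M.takeUntil B.a3 ha3M).edges, e ∈ B.M.edges :=
    fun e he => SimpleGraph.Walk.edges_takeUntil_subset _ _ he
  have hreach1 : (SimpleGraph.fromEdgeSet (↑F' : Set (Sym2 V))).Reachable u v ∧
      (SimpleGraph.fromEdgeSet (↑F' : Set (Sym2 V))).Reachable w x := by
    have hlegb1v : ∀ e ∈ (B.Pu.dropUntil B.b1 hb1Pu).edges, e ∈ F' := fun e he =>
      memPu (SimpleGraph.Walk.edges_dropUntil_subset _ _ he) (D7 e he) (D8 e he)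
    have hlegb3x : ∀ e ∈ (B.Pl.dropUntil B.b3 hb3Pl).edges, e ∈ F' := fun e he =>
      memPl (SimpleGraph.Walk.edges_dropUntil_subset _ _ he) (D10 e he) (D9 e he)
    rcases hcase with hB | hA
    · -- a1 comes (weakly) before a3 on M
      have hsub13 : ∀ e ∈ (B.M.takeUntil B.a1 ha1M).edges,
          e ∈ (B.M.takeUntil B.a3 ha3M).edges := by
        intro e he
        have hdeq : (B.M.takeUntil B.a1 ha1M).darts
            = ((B.M.takeUntil B.a3 ha3M).takeUntil B.a1 hB).darts := by
          apply darts_prefix_unique hMP.support_nodup htU1pre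
          calc ((B.M.takeUntil B.a3 ha3M).takeUntil B.a1 hB).darts
              <+: (B.M.takeUntil B.a3 ha3M).darts :=
                ⟨((B.M.takeUntil B.a3 ha3M).dropUntil B.a1 hB).darts, by
                  rw [← SimpleGraph.Walk.darts_append, SimpleGraph.Walk.take_spec]⟩
            _ <+: B.M.darts := htU3pre
        have he' : e ∈ ((B.M.takeUntil B.a3 ha3M).takeUntil B.a1 hB).edges := by
          show e ∈ _
          have : (B.M.takeUntil B.a1 ha1M).edges
              = ((B.M.takeUntil B.a3 ha3M).takeUntil B.a1 hB).edges := by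
            show (B.M.takeUntil B.a1 ha1M).darts.map SimpleGraph.Dart.edge = _
            rw [hdeq]; rfl
          rwa [this] at he
        exact SimpleGraph.Walk.edges_takeUntil_subset _ _ he'
      have hlegtU1 : ∀ e ∈ (B.M.takeUntil B.a1 ha1M).edges, e ∈ F' := fun e he =>
        memPu (hMPu e (hMtU1 e he)) (D5 e he) (D6 e (hsub13 e he))
      have hlegu : ∀ e ∈ (B.Lu.append (B.M.takeUntil B.a1 ha1M)).edges, e ∈ F' := by
        intro e he
        rw [SimpleGraph.Walk.edges_append] at he
        rcases List.mem_append.mp he with h | h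
        · exact memPu (hLuPu e h) (fun h1 => hSmall e h1 h) (D2 e h)
        · exact hlegtU1 e h
      have hlegw : ∀ e ∈ (B.Ll.append (B.M.takeUntil B.a1 ha1M)).edges, e ∈ F' := by
        intro e he
        rw [SimpleGraph.Walk.edges_append] at he
        rcases List.mem_append.mp he with h | h
        · exact memPl (hLlPl e h) (D3 e h) (fun h3 => hS3Ll e h3 h)
        · exact hlegtU1 e h
      constructor
      · exact ((reachseg _ hlegu).trans
          (reachseg B.q1 (fun e he => memQ1 he))).trans
          (reachseg _ hlegb1v)
      · refine (((reachseg _ hlegw).trans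
          (reachseg (B.q1.takeUntil s hsq1) (fun e he =>
            memQ1 (SimpleGraph.Walk.edges_takeUntil_subset _ _ he)))).trans
          (reachseg (B.q3.dropUntil s hsq3) (fun e he =>
            memQ3 (SimpleGraph.Walk.edges_dropUntil_subset _ _ he)))).trans
          (reachseg _ hlegb3x)
    · -- a3 comes (weakly) before a1 on M
      have hsub31 : ∀ e ∈ (B.M.takeUntil B.a3 ha3M).edges,
          e ∈ (B.M.takeUntil B.a1 ha1M).edges := by
        intro e he
        have hdeq : (B.M.takeUntil B.a3 ha3M).darts
            = ((B.M.takeUntil B.a1 ha1M).takeUntil B.a3 hA).darts := by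
          apply darts_prefix_unique hMP.support_nodup htU3pre
          calc ((B.M.takeUntil B.a1 ha1M).takeUntil B.a3 hA).darts
              <+: (B.M.takeUntil B.a1 ha1M).darts :=
                ⟨((B.M.takeUntil B.a1 ha1M).dropUntil B.a3 hA).darts, by
                  rw [← SimpleGraph.Walk.darts_append, SimpleGraph.Walk.take_spec]⟩
            _ <+: B.M.darts := htU1pre
        have he' : e ∈ ((B.M.takeUntil B.a1 ha1M).takeUntil B.a3 hA).edges := by
          have : (B.M.takeUntil B.a3 ha3M).edges
              = ((B.M.takeUntil B.a1 ha1M).takeUntil B.a3 hA).edges := by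
            show (B.M.takeUntil B.a3 ha3M).darts.map SimpleGraph.Dart.edge = _
            rw [hdeq]; rfl
          rwa [this] at he
        exact SimpleGraph.Walk.edges_takeUntil_subset _ _ he'
      have hlegtU3 : ∀ e ∈ (B.M.takeUntil B.a3 ha3M).edges, e ∈ F' := fun e he =>
        memPu (hMPu e (hMtU3 e he)) (D5 e (hsub31 e he)) (D6 e he)
      have hlegu : ∀ e ∈ (B.Lu.append (B.M.takeUntil B.a3 ha3M)).edges, e ∈ F' := by
        intro e he
        rw [SimpleGraph.Walk.edges_append] at he
        rcases List.mem_append.mp he with h | h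
        · exact memPu (hLuPu e h) (fun h1 => hSmall e h1 h) (D2 e h)
        · exact hlegtU3 e h
      have hlegw : ∀ e ∈ (B.Ll.append (B.M.takeUntil B.a3 ha3M)).edges, e ∈ F' := by
        intro e he
        rw [SimpleGraph.Walk.edges_append] at he
        rcases List.mem_append.mp he with h | h
        · exact memPl (hLlPl e h) (D3 e h) (fun h3 => hS3Ll e h3 h)
        · exact hlegtU3 e h
      constructor
      · refine (((reachseg _ hlegu).trans
          (reachseg (B.q3.takeUntil s hsq3) (fun e he =>
            memQ3 (SimpleGraph.Walk.edges_takeUntil_subset _ _ he)))).trans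
          (reachseg (B.q1.dropUntil s hsq1) (fun e he =>
            memQ1 (SimpleGraph.Walk.edges_dropUntil_subset _ _ he)))).trans
          (reachseg _ hlegb1v)
      · exact ((reachseg _ hlegw).trans
          (reachseg B.q3 (fun e he => memQ3 he))).trans
          (reachseg _ hlegb3x)
  -- the optimality comparison
  obtain ⟨F'', hF''sub, hF''SF⟩ := exists_steinerForest_subset G u v w x F' hF'G
    hreach1.1 hreach1.2
  have hcostF : cost c Ff ≤ cost c F'' := hOpt.2 F'' hF''SF
  have hc2 : cost c F'' ≤ cost c F' :=
    Finset.sum_le_sum_of_subset_of_nonneg hF''sub (fun i _ _ => hc i)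
  have hSfF : Sf ⊆ Ff := by
    intro e he
    rcases Finset.mem_union.mp he with h | h
    · exact Finset.mem_union_left _ (List.mem_toFinset.mpr
        (hS1Pu e (List.mem_toFinset.mp h)))
    · exact Finset.mem_union_right _ (List.mem_toFinset.mpr
        (hS3Pl e (List.mem_toFinset.mp h)))
  have hsplitF : cost c (Ff \ Sf) + cost c Sf = cost c Ff := Finset.sum_sdiff hSfF
  have hF'le : cost c F' ≤ cost c (Ff \ Sf) + cost c Qf := by
    have h1 := Finset.sum_union_inter (s₁ := Ff \ Sf) (s₂ := Qf) (f := c)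
    have hnn : (0:ℝ) ≤ ∑ e ∈ (Ff \ Sf) ∩ Qf, c e := Finset.sum_nonneg (fun i _ => hc i)
    show (∑ e ∈ (Ff \ Sf) ∪ Qf, c e) ≤ _
    unfold cost
    linarith
  have hkey : cost c Sf ≤ cost c Qf := by linarith
  have hQle : cost c Qf ≤ walkCost c B.q1 + walkCost c B.q3 := by
    have h1 := Finset.sum_union_inter (s₁ := B.q1.edges.toFinset)
      (s₂ := B.q3.edges.toFinset) (f := c)
    have hnn : (0:ℝ) ≤ ∑ e ∈ B.q1.edges.toFinset ∩ B.q3.edges.toFinset, c e :=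
      Finset.sum_nonneg (fun i _ => hc i)
    show (∑ e ∈ _ ∪ _, c e) ≤ _
    unfold walkCost
    linarith
  obtain ⟨hξu0, hξl0, hsupp1, hsupp2, hcap, -, -⟩ := hFeas
  have hcapSf : ∀ e ∈ Sf, e ∈ B.Pu.edges.toFinset ∪ B.Pl.edges.toFinset := fun e he =>
    hSfF he
  have hgle : ∀ e ∈ Sf,
      ((if e ∈ S1f then ξu e else 0) + (if e ∈ S3f then ξl e else 0)) ≤ c e := by
    intro e he
    have hcape := hcap e (hcapSf e he)
    by_cases h1 : e ∈ S1f <;> by_cases h3 : e ∈ S3f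
    · rw [if_pos h1, if_pos h3]; exact hcape
    · rw [if_pos h1, if_neg h3, add_zero]; linarith [hξl0 e]
    · rw [if_neg h1, if_pos h3, zero_add]; linarith [hξu0 e]
    · rw [if_neg h1, if_neg h3, add_zero]; exact hc e
  have hsum_g : ∑ e ∈ Sf, ((if e ∈ S1f then ξu e else 0) + (if e ∈ S3f then ξl e else 0))
      = (∑ e ∈ S1f, ξu e) + ∑ e ∈ S3f, ξl e := by
    rw [Finset.sum_add_distrib]
    congr 1
    · rw [← Finset.sum_subset (Finset.subset_union_left : S1f ⊆ Sf)
        (fun e _ hne => if_neg hne)]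
      exact Finset.sum_congr rfl (fun e he => if_pos he)
    · rw [← Finset.sum_subset (Finset.subset_union_right : S3f ⊆ Sf)
        (fun e _ hne => if_neg hne)]
      exact Finset.sum_congr rfl (fun e he => if_pos he)
  have hsum_eq : ∑ e ∈ Sf, ((if e ∈ S1f then ξu e else 0) + (if e ∈ S3f then ξl e else 0))
      = ∑ e ∈ Sf, c e := by
    have hle := Finset.sum_le_sum hgle
    have hge : (∑ e ∈ Sf, c e) ≤
        ∑ e ∈ Sf, ((if e ∈ S1f then ξu e else 0) + (if e ∈ S3f then ξl e else 0)) := by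
      rw [hsum_g, ← ht1, ← ht3]
      calc (∑ e ∈ Sf, c e) = cost c Sf := rfl
        _ ≤ cost c Qf := hkey
        _ ≤ walkCost c B.q1 + walkCost c B.q3 := hQle
    linarith
  have heqpt : ∀ e ∈ Sf,
      ((if e ∈ S1f then ξu e else 0) + (if e ∈ S3f then ξl e else 0)) = c e :=
    (Finset.sum_eq_sum_iff_of_le hgle).mp hsum_eq
  constructor
  · intro e he
    have h1or : e ∈ S1f ∨ e ∈ S3f := by
      rcases he with h | h
      · exact Or.inl (List.mem_toFinset.mpr h)
      · exact Or.inr (List.mem_toFinset.mpr h)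
    have heSf : e ∈ Sf := Finset.mem_union.mpr h1or
    have h := heqpt e heSf
    have hcape := hcap e (hcapSf e heSf)
    by_cases h1 : e ∈ S1f <;> by_cases h3 : e ∈ S3f <;>
      simp only [h1, h3, if_pos, if_neg, if_true, if_false, not_false_iff,
        add_zero, zero_add] at h
    · exact h
    · linarith [hξl0 e]
    · linarith [hξu0 e]
    · exact absurd h1or (by tauto)
  · intro e _ h1 h3
    have h1f : e ∈ S1f := List.mem_toFinset.mpr h1
    have h3f : e ∉ S3f := fun h => h3 (List.mem_toFinset.mp h)
    have heSf : e ∈ Sf := Finset.mem_union.mpr (Or.inl h1f)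
    have h := heqpt e heSf
    rw [if_pos h1f, if_neg h3f, add_zero] at h
    exact h

end NDG
end

section
/- In an NBC5 configuration whose underlying paths form an optimal Steiner forest and whose path q_1 is a tight alternative of the upper player with respect to a feasible LP(F) cost-share assignment in which all commonly used edges are completely paid, the following hold: (i) every edge substituted by q_1 is completely paid; (ii) the upper player (with terminal pair (u,v)) fully pays all commonly used edges. -/
namespace NDG

variable {V : Type*} [DecidableEq V]

section Aux

open SimpleGraph

variable {G : SimpleGraph V}

private lemma NDGaux.eq_of_darts_nil {a b : V} (p : G.Walk a b) (hp : p.darts = []) : a = b := by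
  cases p with
  | nil => rfl
  | cons h q => simp at hp

private lemma NDGaux.darts_head?_fst {a b : V} (p : G.Walk a b) (d : G.Dart)
    (h : p.darts.head? = some d) : d.fst = a := by
  cases p with
  | nil => simp at h
  | cons hadj q =>
    simp only [Walk.darts_cons, List.head?_cons, Option.some.injEq] at h
    rw [← h]

private lemma NDGaux.darts_getLast?_snd {a b : V} (p : G.Walk a b) (d : G.Dart)
    (h : p.darts.getLast? = some d) : d.snd = b := by
  induction p with
  | nil => simp at h
  | cons hadj q ih =>
    rcases hq : q.darts with _ | ⟨d', l⟩
    · have hab := NDGaux.eq_of_darts_nil q hq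
      subst hab
      simp only [Walk.darts_cons, hq, List.getLast?_singleton, Option.some.injEq] at h
      rw [← h]
    · rw [Walk.darts_cons, hq, List.getLast?_cons_cons] at h
      apply ih
      rw [hq]
      exact h

private lemma NDGaux.walk_split_darts {a b : V} (p : G.Walk a b) :
    ∀ l1 l2 : List G.Dart, p.darts = l1 ++ l2 →
      ∃ (γ : V) (p1 : G.Walk a γ) (p2 : G.Walk γ b),
        p = p1.append p2 ∧ p1.darts = l1 ∧ p2.darts = l2 := by
  induction p with
  | nil =>
    intro l1 l2 h
    rw [Walk.darts_nil] at h
    obtain ⟨h1, h2⟩ := List.append_eq_nil_iff.mp h.symm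
    subst h1; subst h2
    exact ⟨_, .nil, .nil, rfl, rfl, rfl⟩
  | cons hadj q ih =>
    intro l1 l2 hl
    cases l1 with
    | nil =>
      refine ⟨_, .nil, .cons hadj q, rfl, rfl, ?_⟩
      simpa using hl
    | cons dd t1 =>
      rw [Walk.darts_cons, List.cons_append] at hl
      injection hl with hd ht
      obtain ⟨γ, p1, p2, he, h1, h2⟩ := ih t1 l2 ht
      refine ⟨γ, .cons hadj p1, p2, ?_, ?_, h2⟩
      · rw [Walk.cons_append, he]
      · rw [Walk.darts_cons, h1, hd]

private lemma NDGaux.reach_of_walk {S : Set (Sym2 V)} {a b y z : V} (p : G.Walk a b)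
    (hp : ∀ e ∈ p.edges, e ∈ S) (hy : y ∈ p.support) (hz : z ∈ p.support) :
    (SimpleGraph.fromEdgeSet S).Reachable y z := by
  have hp' : ∀ e ∈ p.edges, e ∈ (SimpleGraph.fromEdgeSet S).edgeSet := by
    intro e he
    rw [SimpleGraph.edgeSet_fromEdgeSet]
    exact ⟨hp e he, fun hd => G.not_isDiag_of_mem_edgeSet (p.edges_subset_edgeSet he) hd⟩
  have hs := p.support_transfer hp'
  have h1 : (SimpleGraph.fromEdgeSet S).Reachable a y :=
    ((p.transfer _ hp').takeUntil y (by rw [hs]; exact hy)).reachable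
  have h2 : (SimpleGraph.fromEdgeSet S).Reachable a z :=
    ((p.transfer _ hp').takeUntil z (by rw [hs]; exact hz)).reachable
  exact h1.symm.trans h2

private lemma NDGaux.reach_of_delete {H : SimpleGraph V} {xx yy : V}
    (hxy : (H \ SimpleGraph.fromEdgeSet {s(xx, yy)}).Reachable xx yy) :
    ∀ {a b : V}, H.Reachable a b → (H \ SimpleGraph.fromEdgeSet {s(xx, yy)}).Reachable a b := by
  intro a b hab
  obtain ⟨p⟩ := hab
  induction p with
  | nil => exact .refl _
  | @cons a' c' b' hadj q ih =>
    refine Reachable.trans ?_ ih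
    by_cases he : s(a', c') = s(xx, yy)
    · rw [Sym2.eq_iff] at he
      rcases he with ⟨h1, h2⟩ | ⟨h1, h2⟩
      · subst h1; subst h2; exact hxy
      · subst h1; subst h2; exact hxy.symm
    · refine SimpleGraph.Adj.reachable ?_
      rw [SimpleGraph.sdiff_adj]
      exact ⟨hadj, by simp [SimpleGraph.fromEdgeSet_adj, he]⟩

private lemma NDGaux.exists_steiner_subset (G : SimpleGraph V) (u v w x : V) :
    ∀ F4 : Finset (Sym2 V), (↑F4 : Set (Sym2 V)) ⊆ G.edgeSet →
      (SimpleGraph.fromEdgeSet (↑F4 : Set (Sym2 V))).Reachable u v →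
      (SimpleGraph.fromEdgeSet (↑F4 : Set (Sym2 V))).Reachable w x →
      ∃ F5, F5 ⊆ F4 ∧ IsSteinerForest G u v w x F5 := by
  intro F4
  induction F4 using Finset.strongInduction with
  | _ F4 ih =>
    intro hsub h1 h2
    by_cases hac : (SimpleGraph.fromEdgeSet (↑F4 : Set (Sym2 V))).IsAcyclic
    · have key : ∀ (y z : V), (SimpleGraph.fromEdgeSet (↑F4 : Set (Sym2 V))).Reachable y z →
          ∃ p : G.Walk y z, p.IsPath ∧ ∀ e ∈ p.edges, e ∈ F4 := by
        intro y z hr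
        obtain ⟨p0⟩ := hr
        have hPE : ∀ e ∈ p0.toPath.1.edges, e ∈ G.edgeSet := by
          intro e he
          have hh := Walk.edges_subset_edgeSet _ he
          rw [edgeSet_fromEdgeSet] at hh
          exact hsub hh.1
        refine ⟨p0.toPath.1.transfer G hPE, ?_, ?_⟩
        · rw [Walk.isPath_def, Walk.support_transfer]
          exact p0.toPath.2.support_nodup
        · intro e he
          rw [Walk.edges_transfer] at he
          have hh := Walk.edges_subset_edgeSet _ he
          rw [edgeSet_fromEdgeSet] at hh
          exact_mod_cast hh.1
      exact ⟨F4, subset_rfl, hsub, hac, key u v h1, key w x h2⟩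
    · rw [isAcyclic_iff_forall_edge_isBridge] at hac
      push_neg at hac
      obtain ⟨e, heE, hbr⟩ := hac
      revert heE hbr
      refine Sym2.inductionOn e ?_
      intro xx yy heE hbr
      have hadj : (SimpleGraph.fromEdgeSet (↑F4 : Set (Sym2 V))).Adj xx yy :=
        (SimpleGraph.mem_edgeSet _).mp heE
      have hre : (SimpleGraph.fromEdgeSet (↑F4 : Set (Sym2 V)) \
          SimpleGraph.fromEdgeSet {s(xx, yy)}).Reachable xx yy := by
        by_contra hcon
        exact hbr (isBridge_iff.mpr hcon)
      have hmem : s(xx, yy) ∈ F4 := by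
        rw [edgeSet_fromEdgeSet] at heE
        exact_mod_cast heE.1
      have hgraph : SimpleGraph.fromEdgeSet (↑(F4.erase s(xx, yy)) : Set (Sym2 V))
          = SimpleGraph.fromEdgeSet (↑F4 : Set (Sym2 V)) \
            SimpleGraph.fromEdgeSet {s(xx, yy)} := by
        ext a b
        simp only [fromEdgeSet_adj, sdiff_adj, Finset.coe_erase, Set.mem_diff,
          Set.mem_singleton_iff, Finset.mem_coe]
        tauto
      obtain ⟨F5, hF5, hSF⟩ := ih (F4.erase s(xx, yy)) (Finset.erase_ssubset hmem)
        (fun e' he' => hsub (by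
          rw [Finset.mem_coe] at he' ⊢
          exact Finset.mem_of_mem_erase he'))
        (by rw [hgraph]; exact NDGaux.reach_of_delete hre h1)
        (by rw [hgraph]; exact NDGaux.reach_of_delete hre h2)
      exact ⟨F5, hF5.trans (Finset.erase_subset _ _), hSF⟩

private lemma NDGaux.idx_bounds {α : Type*} [DecidableEq α] {E A B C : List α}
    (hE : E = A ++ (B ++ C)) (hnd : E.Nodup) :
    (∀ e ∈ A, E.idxOf e < A.length) ∧
    (∀ e ∈ B, A.length ≤ E.idxOf e ∧ E.idxOf e < A.length + B.length) ∧
    (∀ e ∈ C, A.length + B.length ≤ E.idxOf e) := by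
  subst hE
  obtain ⟨hA, hBC, hdAB⟩ := List.nodup_append.mp hnd
  obtain ⟨hB, hC, hdBC⟩ := List.nodup_append.mp hBC
  refine ⟨?_, ?_, ?_⟩
  · intro e he
    rw [List.idxOf_append_of_mem he]
    exact List.idxOf_lt_length_iff.mpr he
  · intro e he
    have heA : e ∉ A := fun hc => hdAB e hc e (List.mem_append.mpr (Or.inl he)) rfl
    rw [List.idxOf_append_of_notMem heA, List.idxOf_append_of_mem he]
    exact ⟨Nat.le_add_right _ _, by
      have := List.idxOf_lt_length_iff.mpr he
      omega⟩
  · intro e he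
    have heA : e ∉ A := fun hc => hdAB e hc e (List.mem_append.mpr (Or.inr he)) rfl
    have heB : e ∉ B := fun hc => hdBC e hc e he rfl
    rw [List.idxOf_append_of_notMem heA, List.idxOf_append_of_notMem heB]
    omega

end Aux


/-- properties of NBC5.  In an NBC5 configuration whose
underlying paths form an optimal Steiner forest and whose path `q₁` is a tight
alternative of the upper player with respect to a feasible LP(F) cost-share
assignment in which all commonly used edges are completely paid:
(i) every edge substituted by `q₁` is completely paid;
(ii) the upper player (terminal pair `(u,v)`) fully pays all commonly used
edges. -/
theorem nbc5_properties
    [Fintype V] (G : SimpleGraph V) (u v w x : V) (c : Sym2 V → ℝ)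
    (hc : ∀ e, 0 ≤ c e)
    (B : PBC G u v w x)
    (hOpt : IsOptimalSteinerForest G u v w x c
      (B.Pu.edges.toFinset ∪ B.Pl.edges.toFinset))
    (ξu ξl : Sym2 V → ℝ)
    (hFeas : Feasible2 G c B.Pu B.Pl ξu ξl)
    (hPaidM : ∀ e ∈ B.M.edges, ξu e + ξl e = c e)
    (ht1 : walkCost c B.q1 = ∑ e ∈ B.S1.edges.toFinset, ξu e)
    (hNBC5 : B.NBC5) :
    (∀ e ∈ B.S1.edges, ξu e + ξl e = c e) ∧
    (∀ e ∈ B.M.edges, ξu e = c e) := by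
  classical
  open SimpleGraph in
  obtain ⟨⟨s₁, hs₁q, hs₁L, -⟩, ⟨s₂, hs₂q, hs₂R, -⟩⟩ := hNBC5
  obtain ⟨hξu0, hξl0, hsupp1, hsupp2, hcap, hN1, hN2⟩ := hFeas
  -- `S1` is nonempty
  have hS1edne : B.S1.edges ≠ [] := by
    obtain ⟨e, he, -⟩ := B.hC1Ru
    intro h
    rw [h] at he
    exact List.not_mem_nil he
  have hS1dne : B.S1.darts ≠ [] := by
    intro h
    apply hS1edne
    show B.S1.darts.map SimpleGraph.Dart.edge = []
    rw [h]; rfl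
  -- decompose `Pu` along the infix `S1`
  obtain ⟨t1, t2, hdec⟩ := B.hS1
  have hdarts : B.Pu.darts = t1 ++ (B.S1.darts ++ t2) := by
    show ((B.Lu.append B.M).append B.Ru).darts = _
    rw [← hdec, List.append_assoc]
  obtain ⟨γ, T1, rest, hPu_eq, hT1d, hrestd⟩ :=
    NDGaux.walk_split_darts B.Pu t1 (B.S1.darts ++ t2) hdarts
  obtain ⟨δ, mid, T2, hrest_eq, hmidd, hT2d⟩ :=
    NDGaux.walk_split_darts rest B.S1.darts t2 hrestd
  obtain ⟨d0, hd0⟩ : ∃ d, B.S1.darts.head? = some d := by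
    cases h : B.S1.darts with
    | nil => exact absurd h hS1dne
    | cons a l => exact ⟨a, rfl⟩
  obtain ⟨d1, hd1⟩ : ∃ d, B.S1.darts.getLast? = some d := by
    cases h : B.S1.darts with
    | nil => exact absurd h hS1dne
    | cons a l => exact ⟨(a :: l).getLast (by simp), List.getLast?_eq_getLast _⟩
  have hγ : γ = B.a1 :=
    (NDGaux.darts_head?_fst mid d0 (by rw [hmidd]; exact hd0)).symm.trans
      (NDGaux.darts_head?_fst B.S1 d0 hd0)
  have hδ : δ = B.b1 :=
    (NDGaux.darts_getLast?_snd mid d1 (by rw [hmidd]; exact hd1)).symm.trans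
      (NDGaux.darts_getLast?_snd B.S1 d1 hd1)
  subst hγ; subst hδ
  -- edge list decompositions
  have hmide : mid.edges = B.S1.edges := by
    show mid.darts.map SimpleGraph.Dart.edge = B.S1.darts.map SimpleGraph.Dart.edge
    rw [hmidd]
  have hPuE : B.Pu.edges = T1.edges ++ (B.S1.edges ++ T2.edges) := by
    rw [hPu_eq, hrest_eq, Walk.edges_append, Walk.edges_append, hmide]
  have hPuE2 : B.Pu.edges = B.Lu.edges ++ (B.M.edges ++ B.Ru.edges) := by
    show ((B.Lu.append B.M).append B.Ru).edges = _
    rw [Walk.edges_append, Walk.edges_append, List.append_assoc]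
  have hPlE : B.Pl.edges = B.Ll.edges ++ (B.M.edges ++ B.Rl.edges) := by
    show ((B.Ll.append B.M).append B.Rl).edges = _
    rw [Walk.edges_append, Walk.edges_append, List.append_assoc]
  have hnd : B.Pu.edges.Nodup := B.hPu.isTrail.edges_nodup
  have hndl : B.Pl.edges.Nodup := B.hPl.isTrail.edges_nodup
  obtain ⟨hbA, hbB, hbC⟩ := NDGaux.idx_bounds hPuE2 hnd
  obtain ⟨hbX, hbY, hbZ⟩ := NDGaux.idx_bounds hPuE hnd
  -- membership facts
  have hS1Pu : ∀ e ∈ B.S1.edges, e ∈ B.Pu.edges := by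
    intro e he; rw [hPuE]; simp [he]
  have hMPu : ∀ e ∈ B.M.edges, e ∈ B.Pu.edges := by
    intro e he; rw [hPuE2]; simp [he]
  have hLuPu : ∀ e ∈ B.Lu.edges, e ∈ B.Pu.edges := by
    intro e he; rw [hPuE2]; simp [he]
  have hT1Pu : ∀ e ∈ T1.edges, e ∈ B.Pu.edges := by
    intro e he; rw [hPuE]; simp [he]
  have hT2Pu : ∀ e ∈ T2.edges, e ∈ B.Pu.edges := by
    intro e he; rw [hPuE]; simp [he]
  have hLlPl : ∀ e ∈ B.Ll.edges, e ∈ B.Pl.edges := by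
    intro e he; rw [hPlE]; simp [he]
  have hRlPl : ∀ e ∈ B.Rl.edges, e ∈ B.Pl.edges := by
    intro e he; rw [hPlE]; simp [he]
  -- disjointness facts from nodup
  have hndT := hPuE ▸ hnd
  obtain ⟨-, hndT2, hdisjT1⟩ := List.nodup_append.mp hndT
  obtain ⟨-, -, hdisjS1T2⟩ := List.nodup_append.mp hndT2
  have hndL := hPuE2 ▸ hnd
  obtain ⟨-, hndL2, hdisjLu⟩ := List.nodup_append.mp hndL
  have hndPl := hPlE ▸ hndl
  obtain ⟨-, hndPl2, hdisjLl⟩ := List.nodup_append.mp hndPl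
  obtain ⟨-, -, hdisjMRl⟩ := List.nodup_append.mp hndPl2
  -- `T2` avoids `M`
  have hT2M : ∀ e ∈ T2.edges, e ∉ B.M.edges := by
    intro e he hM
    obtain ⟨f, hfS, hfR⟩ := B.hC1Ru
    have h1 := hbZ e he
    have h2 := (hbB e hM).2
    have h3 := (hbY f hfS).2
    have h4 := hbC f hfR
    omega
  -- the modified edge set
  set sF := B.Pu.edges.toFinset ∪ B.Pl.edges.toFinset with hsF
  set D := B.S1.edges.toFinset ∪ B.M.edges.toFinset with hD
  set Q := B.q1.edges.toFinset with hQdef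
  set F4 := (sF \ D) ∪ Q with hF4
  have hDF : D ⊆ sF := by
    intro e he
    rw [hD, Finset.mem_union] at he
    rw [hsF, Finset.mem_union]
    left
    rw [List.mem_toFinset]
    rcases he with h | h
    · exact hS1Pu e (List.mem_toFinset.mp h)
    · exact hMPu e (List.mem_toFinset.mp h)
  have hsFG : (↑sF : Set (Sym2 V)) ⊆ G.edgeSet := hOpt.1.1
  have hF4G : (↑F4 : Set (Sym2 V)) ⊆ G.edgeSet := by
    intro e he
    rw [Finset.mem_coe, hF4, Finset.mem_union, Finset.mem_sdiff] at he
    rcases he with ⟨h, -⟩ | h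
    · exact hsFG (Finset.mem_coe.mpr h)
    · exact B.q1.edges_subset_edgeSet (List.mem_toFinset.mp h)
  -- survivor lemmas
  have hin : ∀ e : Sym2 V, (e ∈ B.Pu.edges ∨ e ∈ B.Pl.edges) → e ∉ B.S1.edges →
      e ∉ B.M.edges → e ∈ (↑F4 : Set (Sym2 V)) := by
    intro e hF hS hM
    rw [Finset.mem_coe, hF4, Finset.mem_union, Finset.mem_sdiff]
    left
    refine ⟨?_, ?_⟩
    · rw [hsF, Finset.mem_union, List.mem_toFinset, List.mem_toFinset]; exact hF
    · rw [hD, Finset.mem_union, List.mem_toFinset, List.mem_toFinset]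
      rintro (h | h)
      · exact hS h
      · exact hM h
  have hq1F4 : ∀ e ∈ B.q1.edges, e ∈ (↑F4 : Set (Sym2 V)) := by
    intro e he
    rw [Finset.mem_coe, hF4, Finset.mem_union]
    exact Or.inr (List.mem_toFinset.mpr he)
  have hLlF4 : ∀ e ∈ B.Ll.edges, e ∈ (↑F4 : Set (Sym2 V)) := by
    intro e he
    have heM : e ∉ B.M.edges := fun hM => hdisjLl e he e (by simp [hM]) rfl
    have heS : e ∉ B.S1.edges := fun hS => heM (B.hmeet e (hS1Pu e hS) (hLlPl e he))
    exact hin e (Or.inr (hLlPl e he)) heS heM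
  have hRlF4 : ∀ e ∈ B.Rl.edges, e ∈ (↑F4 : Set (Sym2 V)) := by
    intro e he
    have heM : e ∉ B.M.edges := fun hM => hdisjMRl e hM e he rfl
    have heS : e ∉ B.S1.edges := fun hS => heM (B.hmeet e (hS1Pu e hS) (hRlPl e he))
    exact hin e (Or.inr (hRlPl e he)) heS heM
  have hT2F4 : ∀ e ∈ T2.edges, e ∈ (↑F4 : Set (Sym2 V)) := by
    intro e he
    have heS : e ∉ B.S1.edges := fun hS => hdisjS1T2 e hS e he rfl
    exact hin e (Or.inl (hT2Pu e he)) heS (hT2M e he)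
  -- reachability of the two terminal pairs in the modified graph
  have hreach2 : (SimpleGraph.fromEdgeSet (↑F4 : Set (Sym2 V))).Reachable w x := by
    have r1 := NDGaux.reach_of_walk B.Ll hLlF4 (Walk.start_mem_support _) hs₁L
    have r2 := NDGaux.reach_of_walk B.q1 hq1F4 hs₁q hs₂q
    have r3 := NDGaux.reach_of_walk B.Rl hRlF4 hs₂R (Walk.end_mem_support _)
    exact (r1.trans r2).trans r3
  have hreach1 : (SimpleGraph.fromEdgeSet (↑F4 : Set (Sym2 V))).Reachable u v := by
    have rT2 := NDGaux.reach_of_walk T2 hT2F4 (Walk.start_mem_support _)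
      (Walk.end_mem_support _)
    by_cases hbig : ∃ e ∈ T1.edges, e ∈ B.M.edges
    · obtain ⟨e0, he0T, he0M⟩ := hbig
      have hLuF4 : ∀ e ∈ B.Lu.edges, e ∈ (↑F4 : Set (Sym2 V)) := by
        intro e he
        have hM : e ∉ B.M.edges := fun h => hdisjLu e he e (by simp [h]) rfl
        have hS : e ∉ B.S1.edges := by
          intro hS
          have h1 := hbA e he
          have h2 := (hbY e hS).1
          have h3 := hbX e0 he0T
          have h4 := (hbB e0 he0M).1
          omega
        exact hin e (Or.inl (hLuPu e he)) hS hM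
      have r1 := NDGaux.reach_of_walk B.Lu hLuF4 (Walk.start_mem_support _)
        (Walk.end_mem_support _)
      have r2 := NDGaux.reach_of_walk B.Ll hLlF4 (Walk.end_mem_support _) hs₁L
      have r3 := NDGaux.reach_of_walk B.q1 hq1F4 hs₁q (Walk.end_mem_support _)
      exact ((r1.trans r2).trans r3).trans rT2
    · push_neg at hbig
      have hT1F4 : ∀ e ∈ T1.edges, e ∈ (↑F4 : Set (Sym2 V)) := fun e he =>
        hin e (Or.inl (hT1Pu e he)) (fun hS => hdisjT1 e he e (by simp [hS]) rfl) (hbig e he)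
      have r1 := NDGaux.reach_of_walk T1 hT1F4 (Walk.start_mem_support _)
        (Walk.end_mem_support _)
      have r2 := NDGaux.reach_of_walk B.q1 hq1F4 (Walk.start_mem_support _)
        (Walk.end_mem_support _)
      exact (r1.trans r2).trans rT2
  -- extract an acyclic Steiner subforest and compare costs
  obtain ⟨F5, hF5sub, hSF5⟩ := NDGaux.exists_steiner_subset G u v w x F4 hF4G hreach1 hreach2
  have hopt : cost c sF ≤ cost c F5 := hOpt.2 F5 hSF5
  have h54 : cost c F5 ≤ cost c F4 :=
    Finset.sum_le_sum_of_subset_of_nonneg hF5sub (fun i _ _ => hc i)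
  have h4 : cost c F4 ≤ cost c (sF \ D) + cost c Q := by
    have hui := Finset.sum_union_inter (s₁ := sF \ D) (s₂ := Q) (f := c)
    have hnn : (0 : ℝ) ≤ ∑ e ∈ (sF \ D) ∩ Q, c e := Finset.sum_nonneg (fun i _ => hc i)
    show (∑ e ∈ (sF \ D) ∪ Q, c e) ≤ (∑ e ∈ sF \ D, c e) + ∑ e ∈ Q, c e
    linarith
  have hsplit : cost c (sF \ D) + cost c D = cost c sF := Finset.sum_sdiff hDF
  have hDQ : cost c D ≤ cost c Q := by linarith
  have hQ1 : cost c Q = ∑ e ∈ B.S1.edges.toFinset, ξu e := ht1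
  have hS1capmem : ∀ e ∈ B.S1.edges.toFinset, e ∈ B.Pu.edges.toFinset ∪ B.Pl.edges.toFinset := by
    intro e he
    exact Finset.mem_union_left _ (List.mem_toFinset.mpr (hS1Pu e (List.mem_toFinset.mp he)))
  have hS1subD : B.S1.edges.toFinset ⊆ D := by
    rw [hD]; exact Finset.subset_union_left
  have hx1x2 : (∑ e ∈ B.S1.edges.toFinset, ξu e) ≤ ∑ e ∈ B.S1.edges.toFinset, (ξu e + ξl e) :=
    Finset.sum_le_sum (fun i _ => by linarith [hξl0 i])
  have hx2x3 : (∑ e ∈ B.S1.edges.toFinset, (ξu e + ξl e)) ≤ ∑ e ∈ B.S1.edges.toFinset, c e :=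
    Finset.sum_le_sum (fun e he => hcap e (hS1capmem e he))
  have hx3x4 : (∑ e ∈ B.S1.edges.toFinset, c e) ≤ cost c D :=
    Finset.sum_le_sum_of_subset_of_nonneg hS1subD (fun i _ _ => hc i)
  have heq23 : (∑ e ∈ B.S1.edges.toFinset, (ξu e + ξl e)) = ∑ e ∈ B.S1.edges.toFinset, c e := by
    have : cost c D ≤ ∑ e ∈ B.S1.edges.toFinset, ξu e := by rw [← hQ1]; exact hDQ
    linarith
  have hpt : ∀ e ∈ B.S1.edges.toFinset, ξu e + ξl e = c e :=
    (Finset.sum_eq_sum_iff_of_le (fun e he => hcap e (hS1capmem e he))).mp heq23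
  have heq12 : (∑ e ∈ B.S1.edges.toFinset, ξu e) = ∑ e ∈ B.S1.edges.toFinset, (ξu e + ξl e) := by
    have : cost c D ≤ ∑ e ∈ B.S1.edges.toFinset, ξu e := by rw [← hQ1]; exact hDQ
    linarith
  have hl0 : ∀ e ∈ B.S1.edges.toFinset, ξl e = 0 := by
    have hsum : (∑ e ∈ B.S1.edges.toFinset, ξl e) = 0 := by
      have hadd : (∑ e ∈ B.S1.edges.toFinset, (ξu e + ξl e)) =
          (∑ e ∈ B.S1.edges.toFinset, ξu e) + ∑ e ∈ B.S1.edges.toFinset, ξl e :=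
        Finset.sum_add_distrib
      linarith
    exact (Finset.sum_eq_zero_iff_of_nonneg (fun e _ => hξl0 e)).mp hsum
  have hc0 : ∀ e ∈ D \ B.S1.edges.toFinset, c e = 0 := by
    have hsd := Finset.sum_sdiff (f := c) hS1subD
    have heq34 : (∑ e ∈ B.S1.edges.toFinset, c e) = cost c D := by
      have : cost c D ≤ ∑ e ∈ B.S1.edges.toFinset, ξu e := by rw [← hQ1]; exact hDQ
      linarith
    have hz : (∑ e ∈ D \ B.S1.edges.toFinset, c e) = 0 := by
      show (∑ e ∈ D \ B.S1.edges.toFinset, c e) = 0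
      have : cost c D = ∑ e ∈ D, c e := rfl
      linarith
    exact (Finset.sum_eq_zero_iff_of_nonneg (fun e _ => hc e)).mp hz
  constructor
  · intro e he
    exact hpt e (List.mem_toFinset.mpr he)
  · intro e he
    by_cases hs : e ∈ B.S1.edges
    · have h1 := hl0 e (List.mem_toFinset.mpr hs)
      have h2 := hPaidM e he
      linarith
    · have hce : c e = 0 := hc0 e (Finset.mem_sdiff.mpr
        ⟨by rw [hD]; exact Finset.mem_union_right _ (List.mem_toFinset.mpr he),
         fun hc' => hs (List.mem_toFinset.mp hc')⟩)
      have hp := hPaidM e he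
      have h1 := hξu0 e
      have h2 := hξl0 e
      linarith

end NDG
end
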